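/- arXiv:2009.08865 — 9 statements merged into one kernel-verified Lean document; each statement's English description precedes it below -/
import Mathlib

section
/- If two permutations v and w in S_n have the same odd diagram, then v^{-1}(1) = w^{-1}(1); that is, the value 1 occurs in the same position in both permutations. -/
def oddDiagram {n : ℕ} (w : Equiv.Perm (Fin n)) : Finset (Fin n × Fin n) :=
  Finset.univ.filter (fun p => (p.2 : ℕ) < (w p.1 : ℕ) ∧ (p.1 : ℕ) < (w.symm p.2 : ℕ) ∧
    (p.1 : ℕ) % 2 ≠ (w.symm p.2 : ℕ) % 2)

def invLength {n : ℕ} (w : Equiv.Perm (Fin n)) : ℕ :=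
  (Finset.univ.filter (fun p : Fin n × Fin n => p.1 < p.2 ∧ w p.2 < w p.1)).card

def bruhatLE {n : ℕ} : Equiv.Perm (Fin n) → Equiv.Perm (Fin n) → Prop :=
  Relation.ReflTransGen (fun u v => ∃ t : Equiv.Perm (Fin n), t.IsSwap ∧ v = u * t ∧ invLength u < invLength v)

def contains213 {n : ℕ} (w : Equiv.Perm (Fin n)) : Prop :=
  ∃ i h j : Fin n, i < h ∧ h < j ∧ w h < w i ∧ w i < w j

def contains312 {n : ℕ} (w : Equiv.Perm (Fin n)) : Prop :=
  ∃ i h j : Fin n, i < h ∧ h < j ∧ w h < w j ∧ w j < w i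

lemma oddDiagram_col0 {n : ℕ} (hn : 0 < n) (u : Equiv.Perm (Fin n)) (i : Fin n) :
    (i, (⟨0, hn⟩ : Fin n)) ∈ oddDiagram u ↔
      (i : ℕ) < (u.symm ⟨0, hn⟩ : ℕ) ∧ (i : ℕ) % 2 ≠ (u.symm ⟨0, hn⟩ : ℕ) % 2 := by
  simp only [oddDiagram, Finset.mem_filter, Finset.mem_univ, true_and]
  constructor
  · rintro ⟨_, h2, h3⟩; exact ⟨h2, h3⟩
  · rintro ⟨h2, h3⟩
    refine ⟨?_, h2, h3⟩
    have hne : u i ≠ ⟨0, hn⟩ := by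
      intro he
      have : i = u.symm ⟨0, hn⟩ := by rw [← he]; simp
      rw [this] at h2; exact lt_irrefl _ h2
    exact Nat.pos_of_ne_zero (fun h0 => hne (Fin.ext h0))

lemma col0_lt_false {n : ℕ} (hn : 0 < n) (v w : Equiv.Perm (Fin n))
    (h : oddDiagram v = oddDiagram w)
    (hlt : (v.symm ⟨0, hn⟩ : ℕ) < (w.symm ⟨0, hn⟩ : ℕ)) : False := by
  set a : ℕ := (v.symm ⟨0, hn⟩ : ℕ) with ha
  set b : ℕ := (w.symm ⟨0, hn⟩ : ℕ) with hb
  obtain ⟨i, hi1, hi2, hi3⟩ : ∃ i, a ≤ i ∧ i < b ∧ i % 2 ≠ b % 2 := by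
    refine ⟨if a % 2 = b % 2 then a + 1 else a, ?_⟩
    split <;> omega
  have hin : i < n := lt_trans hi2 (w.symm ⟨0, hn⟩).isLt
  have hmem : ((⟨i, hin⟩ : Fin n), (⟨0, hn⟩ : Fin n)) ∈ oddDiagram w :=
    (oddDiagram_col0 hn w ⟨i, hin⟩).mpr ⟨hi2, hi3⟩
  rw [← h] at hmem
  have := ((oddDiagram_col0 hn v ⟨i, hin⟩).mp hmem).1
  simp only [Fin.val_mk] at this
  omega

theorem stmt0 {n : ℕ} (hn : 0 < n) (v w : Equiv.Perm (Fin n))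
    (h : oddDiagram v = oddDiagram w) :
    v.symm ⟨0, hn⟩ = w.symm ⟨0, hn⟩ := by
  by_contra hne
  rcases lt_or_gt_of_ne (fun he : (v.symm ⟨0, hn⟩ : ℕ) = (w.symm ⟨0, hn⟩ : ℕ) =>
      hne (Fin.ext he)) with hlt | hgt
  · exact col0_lt_false hn v w h hlt
  · exact col0_lt_false hn w v h.symm hgt
end

section
/- If v and w are distinct permutations in S_n with the same odd diagram, then one of them contains the pattern 213 and the other contains the pattern 312. -/
lemma mem_oD {n : ℕ} (u : Equiv.Perm (Fin n)) (i j : Fin n) :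
    (i, j) ∈ oddDiagram u ↔ ((j : ℕ) < (u i : ℕ) ∧ (i : ℕ) < (u.symm j : ℕ) ∧
      (i : ℕ) % 2 ≠ (u.symm j : ℕ) % 2) := by
  simp [oddDiagram]

lemma odd_card {n : ℕ} (u : Equiv.Perm (Fin n)) :
    (Finset.univ.filter (fun j : Fin n => (u.symm j : ℕ) % 2 = 1)).card
      = (Finset.univ.filter (fun i : Fin n => (i : ℕ) % 2 = 1)).card := by
  apply Finset.card_bij' (fun j _ => u.symm j) (fun i _ => u i)
  · intro j hj
    simp only [Finset.mem_filter, Finset.mem_univ, true_and] at hj ⊢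
    exact hj
  · intro i hi
    simp only [Finset.mem_filter, Finset.mem_univ, true_and, Equiv.symm_apply_apply] at hi ⊢
    exact hi
  · intro j _; simp
  · intro i _; simp

lemma key {n : ℕ} (v w : Equiv.Perm (Fin n)) (a : Fin n)
    (hpre : ∀ i : Fin n, i < a → v i = w i)
    (hlt : (v a : ℕ) < (w a : ℕ))
    (h : oddDiagram v = oddDiagram w) :
    contains213 v ∧ contains312 w := by
  have hvb : v.symm (v a) = a := v.symm_apply_apply a
  have hwc : w.symm (w a) = a := w.symm_apply_apply a
  -- q : position of b := v a in w
  have hq_gt : (a : ℕ) < (w.symm (v a) : ℕ) := by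
    rcases lt_trichotomy (w.symm (v a)) a with hc | hc | hc
    · exfalso
      have h1 := hpre _ hc
      have h2 : v (w.symm (v a)) = v a := by
        rw [h1, w.apply_symm_apply]
      have := v.injective h2
      rw [this] at hc; exact lt_irrefl a hc
    · exfalso
      have h2 := congrArg w hc
      rw [w.apply_symm_apply] at h2
      have := congrArg Fin.val h2
      omega
    · exact hc
  have hq_par : ((w.symm (v a) : ℕ)) % 2 = (a : ℕ) % 2 := by
    by_contra hpar
    have hm : (a, v a) ∈ oddDiagram w := by
      rw [mem_oD]
      exact ⟨hlt, hq_gt, fun hh => hpar (hh.symm)⟩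
    rw [← h, mem_oD, hvb] at hm
    omega
  have hq2 : (a : ℕ) + 2 ≤ (w.symm (v a) : ℕ) := by omega
  have hn1 : (a : ℕ) + 1 < n := lt_of_le_of_lt (by omega) (w.symm (v a)).isLt
  set a1 : Fin n := ⟨(a : ℕ) + 1, hn1⟩ with ha1
  have ha1v : (a1 : ℕ) = (a : ℕ) + 1 := rfl
  have hwd : w.symm (w a1) = a1 := w.symm_apply_apply a1
  -- d := w a1 < b
  have hdb : (w a1 : ℕ) < (v a : ℕ) := by
    have hne : (w a1 : ℕ) ≠ (v a : ℕ) := by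
      intro hh
      have h1 : w a1 = v a := Fin.ext hh
      have h2 := congrArg w.symm h1
      rw [hwd] at h2
      have := congrArg Fin.val h2
      omega
    by_contra hge
    have hm : (a1, v a) ∈ oddDiagram w := by
      rw [mem_oD]
      exact ⟨by omega, by omega, by omega⟩
    rw [← h, mem_oD, hvb] at hm
    omega
  have h312 : contains312 w := by
    refine ⟨a, a1, w.symm (v a), ?_, ?_, ?_, ?_⟩
    · rw [Fin.lt_def]; omega
    · rw [Fin.lt_def]; omega
    · rw [Fin.lt_def, w.apply_symm_apply]; omega
    · rw [Fin.lt_def, w.apply_symm_apply]; omega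
  -- r := v.symm d
  have hmad : (a, w a1) ∈ oddDiagram w := by
    rw [mem_oD, hwd]
    exact ⟨by omega, by omega, by omega⟩
  rw [← h, mem_oD] at hmad
  obtain ⟨-, har, harp⟩ := hmad
  have hva1ne : (v a1 : ℕ) ≠ (v a : ℕ) := by
    intro hh
    have h1 : v a1 = v a := Fin.ext hh
    have := congrArg Fin.val (v.injective h1)
    omega
  -- position of c := w a in v is > a
  have hp_gt : (a : ℕ) < (v.symm (w a) : ℕ) := by
    rcases lt_trichotomy (v.symm (w a)) a with hc | hc | hc
    · exfalso
      have h1 := hpre _ hc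
      have h2 : w (v.symm (w a)) = w a := by
        rw [← h1, v.apply_symm_apply]
      have := w.injective h2
      rw [this] at hc; exact lt_irrefl a hc
    · exfalso
      have h2 := congrArg v hc
      rw [v.apply_symm_apply] at h2
      have := congrArg Fin.val h2
      omega
    · exact hc
  rcases lt_or_gt_of_ne hva1ne with hA | hB
  · -- Case A : v a1 < b
    refine ⟨?_, h312⟩
    have hpne : (v.symm (w a) : ℕ) ≠ (a : ℕ) + 1 := by
      intro hh
      have h1 : v.symm (w a) = a1 := Fin.ext (by omega)
      have h2 := congrArg v h1
      rw [v.apply_symm_apply] at h2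
      have := congrArg Fin.val h2
      omega
    refine ⟨a, a1, v.symm (w a), ?_, ?_, ?_, ?_⟩
    · rw [Fin.lt_def]; omega
    · rw [Fin.lt_def]; omega
    · rw [Fin.lt_def]; omega
    · rw [Fin.lt_def, v.apply_symm_apply]; omega
  · -- Case B : b < v a1
    refine ⟨?_, h312⟩
    have hrne1 : (v.symm (w a1) : ℕ) ≠ (a : ℕ) + 1 := by
      intro hh
      have h1 : v.symm (w a1) = a1 := Fin.ext (by omega)
      have h2 := congrArg v h1
      rw [v.apply_symm_apply] at h2
      have := congrArg Fin.val h2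
      omega
    have hr3 : (a : ℕ) + 3 ≤ (v.symm (w a1) : ℕ) := by omega
    have hn2 : (a : ℕ) + 2 < n := lt_of_le_of_lt (by omega) (v.symm (w a1)).isLt
    set a2 : Fin n := ⟨(a : ℕ) + 2, hn2⟩ with ha2
    have ha2v : (a2 : ℕ) = (a : ℕ) + 2 := rfl
    have hva2 : (v a2 : ℕ) < (w a1 : ℕ) := by
      have hne : (v a2 : ℕ) ≠ (w a1 : ℕ) := by
        intro hh
        have h1 : v a2 = w a1 := Fin.ext hh
        have h2 := congrArg v.symm h1
        rw [v.symm_apply_apply] at h2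
        have := congrArg Fin.val h2
        omega
      by_contra hge
      have hm : (a2, w a1) ∈ oddDiagram v := by
        rw [mem_oD]
        exact ⟨by omega, by omega, by omega⟩
      rw [h, mem_oD, hwd] at hm
      omega
    by_cases hex : ∃ j : Fin n, (a : ℕ) + 2 < (j : ℕ) ∧ (v a : ℕ) < (v j : ℕ)
    · obtain ⟨j, hj1, hj2⟩ := hex
      refine ⟨a, a2, j, ?_, ?_, ?_, ?_⟩
      · rw [Fin.lt_def]; omega
      · rw [Fin.lt_def]; omega
      · rw [Fin.lt_def]; omega
      · rw [Fin.lt_def]; omega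
    · exfalso
      push_neg at hex
      -- v a1 = w a
      have hva1c : v a1 = w a := by
        have h1 : ¬ ((a : ℕ) + 2 < (v.symm (w a) : ℕ)) := by
          intro hh
          have := hex _ hh
          rw [v.apply_symm_apply] at this
          omega
        have h2 : (v.symm (w a) : ℕ) ≠ (a : ℕ) + 2 := by
          intro hh
          have hx : v.symm (w a) = a2 := Fin.ext (by omega)
          have h3 := congrArg v hx
          rw [v.apply_symm_apply] at h3
          have := congrArg Fin.val h3
          omega
        have h3 : (v.symm (w a) : ℕ) = (a : ℕ) + 1 := by omega
        have hx : v.symm (w a) = a1 := Fin.ext (by omega)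
        have h4 := congrArg v hx
        rw [v.apply_symm_apply] at h4
        exact h4.symm
      -- parity transfer for all values ≠ w a
      have claim2 : ∀ j : Fin n, j ≠ w a →
          ((v.symm j : ℕ) % 2 = 1 ↔ (w.symm j : ℕ) % 2 = 1) := by
        intro j hj
        have hvs : v (v.symm j) = j := v.apply_symm_apply j
        have hwt : w (w.symm j) = j := w.apply_symm_apply j
        rcases lt_trichotomy (v.symm j) a with hc | hc | hc
        · have h1 := hpre _ hc
          have h2 : w (v.symm j) = j := by rw [← h1, hvs]
          have h3 := congrArg w.symm h2
          rw [w.symm_apply_apply] at h3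
          rw [← h3]
        · have hjb : j = v a := by rw [← hc, hvs]
          rw [hjb, hvb, hq_par]
        · -- a < v.symm j
          have ht_gt : (a : ℕ) < (w.symm j : ℕ) := by
            rcases lt_trichotomy (w.symm j) a with hd | hd | hd
            · exfalso
              have h1 := hpre _ hd
              have h2 : v (w.symm j) = j := by rw [h1, hwt]
              have h3 := congrArg v.symm h2
              rw [v.symm_apply_apply] at h3
              rw [h3] at hd
              exact absurd (lt_trans hc hd) (lt_irrefl a)
            · exfalso
              have : j = w a := by rw [← hd, hwt]
              exact hj this
            · exact Fin.lt_def.mp hd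
          have hjltb : (j : ℕ) < (v a : ℕ) := by
            have hsa : (a : ℕ) < (v.symm j : ℕ) := Fin.lt_def.mp hc
            have hne1 : (v.symm j : ℕ) ≠ (a : ℕ) + 1 := by
              intro hh
              have hx : v.symm j = a1 := Fin.ext (by omega)
              have h3 := congrArg v hx
              rw [v.apply_symm_apply] at h3
              rw [hva1c] at h3
              exact hj h3
            rcases Nat.lt_or_ge ((a : ℕ) + 2) (v.symm j : ℕ) with hgt | hle
            · have h1 := hex _ hgt
              rw [hvs] at h1
              have hne2 : (j : ℕ) ≠ (v a : ℕ) := by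
                intro hh
                have hx : j = v a := Fin.ext hh
                rw [hx, hvb] at hsa
                omega
              omega
            · have h3 : (v.symm j : ℕ) = (a : ℕ) + 2 := by omega
              have hx : v.symm j = a2 := Fin.ext (by omega)
              have h4 := congrArg v hx
              rw [v.apply_symm_apply] at h4
              have := congrArg Fin.val h4
              omega
          have hsa : (a : ℕ) < (v.symm j : ℕ) := Fin.lt_def.mp hc
          have hmp : (a : ℕ) % 2 ≠ (v.symm j : ℕ) % 2 →
              (a : ℕ) % 2 ≠ (w.symm j : ℕ) % 2 := by
            intro hpar
            have hm : (a, j) ∈ oddDiagram v := by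
              rw [mem_oD]; exact ⟨hjltb, hsa, hpar⟩
            rw [h, mem_oD] at hm
            exact hm.2.2
          have hmpr : (a : ℕ) % 2 ≠ (w.symm j : ℕ) % 2 →
              (a : ℕ) % 2 ≠ (v.symm j : ℕ) % 2 := by
            intro hpar
            have hm : (a, j) ∈ oddDiagram w := by
              rw [mem_oD]; exact ⟨by omega, ht_gt, hpar⟩
            rw [← h, mem_oD] at hm
            exact hm.2.2
          constructor
          · intro h1
            by_contra h2
            by_cases hs : (a : ℕ) % 2 = (v.symm j : ℕ) % 2
            · omega
            · have := hmp hs; omega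
          · intro h1
            by_contra h2
            by_cases hs : (a : ℕ) % 2 = (w.symm j : ℕ) % 2
            · omega
            · have := hmpr hs; omega
      -- counting contradiction
      have hvc : v.symm (w a) = a1 := by rw [← hva1c, v.symm_apply_apply]
      set A := Finset.univ.filter (fun j : Fin n => (v.symm j : ℕ) % 2 = 1) with hA
      set B := Finset.univ.filter (fun j : Fin n => (w.symm j : ℕ) % 2 = 1) with hB
      have hcard : A.card = B.card := by rw [hA, hB, odd_card, odd_card]
      have herase : A.erase (w a) = B.erase (w a) := by
        ext j
        simp only [Finset.mem_erase, hA, hB, Finset.mem_filter, Finset.mem_univ, true_and]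
        constructor
        · rintro ⟨hj1, hj2⟩; exact ⟨hj1, (claim2 j hj1).mp hj2⟩
        · rintro ⟨hj1, hj2⟩; exact ⟨hj1, (claim2 j hj1).mpr hj2⟩
      have hcA : (w a) ∈ A ↔ ((a : ℕ) + 1) % 2 = 1 := by
        rw [hA, Finset.mem_filter, hvc]
        simp [ha1v]
      have hcB : (w a) ∈ B ↔ (a : ℕ) % 2 = 1 := by
        rw [hB, Finset.mem_filter, hwc]
        simp
      rcases Nat.mod_two_eq_zero_or_one (a : ℕ) with hpar | hpar
      · have h1 : (w a) ∈ A := hcA.mpr (by omega)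
        have h2 : (w a) ∉ B := fun hh => by have := hcB.mp hh; omega
        have e1 : (A.erase (w a)).card = A.card - 1 := Finset.card_erase_of_mem h1
        have e2 : B.erase (w a) = B := Finset.erase_eq_of_notMem h2
        have hApos : 0 < A.card := Finset.card_pos.mpr ⟨_, h1⟩
        rw [e2] at herase
        have := congrArg Finset.card herase
        omega
      · have h1 : (w a) ∈ B := hcB.mpr hpar
        have h2 : (w a) ∉ A := fun hh => by have := hcA.mp hh; omega
        have e1 : (B.erase (w a)).card = B.card - 1 := Finset.card_erase_of_mem h1
        have e2 : A.erase (w a) = A := Finset.erase_eq_of_notMem h2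
        have hBpos : 0 < B.card := Finset.card_pos.mpr ⟨_, h1⟩
        rw [e2] at herase
        have := congrArg Finset.card herase
        omega

theorem stmt1 {n : ℕ} (v w : Equiv.Perm (Fin n)) (hne : v ≠ w)
    (h : oddDiagram v = oddDiagram w) :
    (contains213 v ∧ contains312 w) ∨ (contains312 v ∧ contains213 w) := by
  have hex : ∃ i : Fin n, v i ≠ w i := by
    by_contra hc
    push_neg at hc
    exact hne (Equiv.ext hc)
  set S := Finset.univ.filter (fun i : Fin n => v i ≠ w i) with hS
  have hSne : S.Nonempty := by
    obtain ⟨i, hi⟩ := hex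
    exact ⟨i, by simp [hS, hi]⟩
  set a := S.min' hSne with ha
  have haS : a ∈ S := S.min'_mem hSne
  have hane : v a ≠ w a := by
    simpa [hS] using haS
  have hpre : ∀ i : Fin n, i < a → v i = w i := by
    intro i hi
    by_contra hc
    have hiS : i ∈ S := by simp [hS, hc]
    have := S.min'_le i hiS
    rw [← ha] at this
    exact absurd (lt_of_lt_of_le hi this) (lt_irrefl i)
  rcases Nat.lt_trichotomy (v a : ℕ) (w a : ℕ) with hc | hc | hc
  · exact Or.inl (key v w a hpre hc h)
  · exact absurd (Fin.ext hc) hane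
  · have := key w v a (fun i hi => (hpre i hi).symm) hc h.symm
    exact Or.inr ⟨this.2, this.1⟩
end

section
/- The map sending a permutation to its odd diagram is injective on the set of 213-avoiding permutations in S_n: if v ≠ w both avoid the pattern 213, then D_o(v) ≠ D_o(w). -/
open Finset Equiv

set_option maxRecDepth 10000

lemma mem_oddDiagram {n : ℕ} {w : Perm (Fin n)} {p : Fin n × Fin n} :
    p ∈ oddDiagram w ↔ (p.2 : ℕ) < (w p.1 : ℕ) ∧ (p.1 : ℕ) < (w.symm p.2 : ℕ) ∧
      (p.1 : ℕ) % 2 ≠ (w.symm p.2 : ℕ) % 2 := by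
  simp [oddDiagram]

/-- permutation invariance of filter cards -/
lemma card_filter_perm {n : ℕ} (v : Perm (Fin n)) (q : Fin n → Prop) [DecidablePred q] :
    (univ.filter fun j => q (v j)).card = (univ.filter q).card := by
  refine Finset.card_equiv v (fun i => ?_)
  simp

lemma card_filter_val_lt {n : ℕ} (c : ℕ) (hc : c ≤ n) :
    (univ.filter fun x : Fin n => (x : ℕ) < c).card = c := by
  rw [← Finset.card_range c]
  refine Finset.card_bij' (fun x _ => (x : ℕ)) (fun m hm => ⟨m, by simp only [Finset.mem_range] at hm; omega⟩)
    ?_ ?_ ?_ ?_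
  · intro x hx; simp at hx ⊢; omega
  · intro m hm; simp at hm ⊢; omega
  · intro x hx; simp
  · intro m hm; simp

lemma card_filter_val_le {n : ℕ} (c : ℕ) (hc : c ≤ n) :
    (univ.filter fun x : Fin n => c ≤ (x : ℕ)).card = n - c := by
  have h1 := Finset.card_filter_add_card_filter_not
    (s := (univ : Finset (Fin n))) (p := fun x : Fin n => (x : ℕ) < c)
  have h2 : (univ.filter fun x : Fin n => ¬ (x : ℕ) < c)
      = (univ.filter fun x : Fin n => c ≤ (x : ℕ)) := by
    apply Finset.filter_congr; intro x _; exact not_lt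
  rw [card_filter_val_lt c hc, h2] at h1
  simp at h1
  omega

/-- Block lemma: in a 213-avoiding permutation, every value smaller than the first value
occupies one of the last `v 0` positions. -/
lemma avoid_block {n : ℕ} {v : Perm (Fin (n+1))} (hv : ¬ contains213 v)
    (j : Fin (n+1)) (hj : (j : ℕ) < (v 0 : ℕ)) :
    (n+1) - (v 0 : ℕ) ≤ (v.symm j : ℕ) := by
  have hvh : v (v.symm j) = j := v.apply_symm_apply j
  have hpos : (0:ℕ) < (v.symm j : ℕ) := by
    rcases Nat.eq_zero_or_pos (v.symm j : ℕ) with h0 | h0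
    · exfalso
      have h1 : v.symm j = 0 := Fin.ext h0
      rw [h1] at hvh
      omega
    · exact h0
  have hsub : (univ.filter fun k : Fin (n+1) => (v 0 : ℕ) ≤ (v k : ℕ)) ⊆
      (univ.filter fun k : Fin (n+1) => (k : ℕ) < (v.symm j : ℕ)) := by
    intro k hk
    simp only [Finset.mem_filter, Finset.mem_univ, true_and] at hk ⊢
    by_cases hk0 : k = 0
    · rw [hk0]
      simpa using hpos
    have hka : (v 0 : ℕ) < (v k : ℕ) := by
      rcases eq_or_lt_of_le hk with h' | h'
      · exact absurd (v.injective (Fin.ext h')).symm hk0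
      · exact h'
    by_contra hlt
    push_neg at hlt
    rcases eq_or_lt_of_le hlt with h' | h'
    · have h1 : v.symm j = k := Fin.ext h'
      rw [h1] at hvh
      omega
    · refine hv ⟨0, v.symm j, k, ?_, ?_, ?_, ?_⟩
      · exact Fin.lt_def.2 (by simpa using hpos)
      · exact Fin.lt_def.2 h'
      · rw [hvh]
        exact Fin.lt_def.2 hj
      · exact Fin.lt_def.2 hka
  have hc1 : (univ.filter fun k : Fin (n+1) => (v 0 : ℕ) ≤ (v k : ℕ)).card
      = (n+1) - (v 0 : ℕ) := by
    rw [card_filter_perm v (fun x => (v 0 : ℕ) ≤ (x : ℕ))]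
    exact card_filter_val_le _ (by omega)
  have hc2 : (univ.filter fun k : Fin (n+1) => (k : ℕ) < (v.symm j : ℕ)).card
      = (v.symm j : ℕ) := card_filter_val_lt _ (by omega)
  have := Finset.card_le_card hsub
  omega

/-- converse direction of the block lemma -/
lemma avoid_block_iff {n : ℕ} {v : Perm (Fin (n+1))} (hv : ¬ contains213 v)
    (j : Fin (n+1)) :
    (j : ℕ) < (v 0 : ℕ) ↔ (n+1) - (v 0 : ℕ) ≤ (v.symm j : ℕ) := by
  constructor
  · exact avoid_block hv j
  · intro hge
    set a := v 0 with ha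
    have hsub : (univ.filter fun x : Fin (n+1) => (x : ℕ) < (a : ℕ)) ⊆
        (univ.filter fun x : Fin (n+1) => (n+1) - (a : ℕ) ≤ (v.symm x : ℕ)) := by
      intro x hx
      simp only [Finset.mem_filter, Finset.mem_univ, true_and] at hx ⊢
      exact avoid_block hv x hx
    have hc1 : (univ.filter fun x : Fin (n+1) => (x : ℕ) < (a : ℕ)).card = (a : ℕ) :=
      card_filter_val_lt _ (by omega)
    have hc2 : (univ.filter fun x : Fin (n+1) =>
        (n+1) - (a : ℕ) ≤ (v.symm x : ℕ)).card = (a : ℕ) := by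
      rw [card_filter_perm v.symm (fun x => (n+1) - (a : ℕ) ≤ (x : ℕ))]
      rw [card_filter_val_le _ (by omega)]
      omega
    have heq := Finset.eq_of_subset_of_card_le hsub (by omega)
    have : j ∈ (univ.filter fun x : Fin (n+1) => (x : ℕ) < (a : ℕ)) := by
      rw [heq]
      simp only [Finset.mem_filter, Finset.mem_univ, true_and]
      exact hge
    simpa using this

/-- The key lemma: two 213-avoiding permutations with the same odd diagram cannot have
`v 0 < w 0`. -/
lemma first_val_not_lt {n : ℕ} {v w : Perm (Fin (n+1))} (hv : ¬ contains213 v)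
    (hw : ¬ contains213 w) (hD : oddDiagram v = oddDiagram w) :
    ¬ ((v 0 : ℕ) < (w 0 : ℕ)) := by
  intro hlt
  have hva : v.symm (v 0) = 0 := v.symm_apply_apply 0
  -- step 2a
  have h2a : ∀ i : Fin (n+1), (i : ℕ) < (w.symm (v 0) : ℕ) →
      (i : ℕ) % 2 ≠ (w.symm (v 0) : ℕ) % 2 → (w i : ℕ) < (v 0 : ℕ) := by
    intro i hiP hipar
    by_contra hge
    push_neg at hge
    have hia : (v 0 : ℕ) < (w i : ℕ) := by
      rcases eq_or_lt_of_le hge with h' | h'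
      · exfalso
        have h1 : w i = v 0 := Fin.ext h'.symm
        have h2 : i = w.symm (v 0) := by rw [← h1]; simp
        rw [h2] at hiP
        omega
      · exact h'
    have hmem : ((i, v 0) : Fin (n+1) × Fin (n+1)) ∈ oddDiagram w :=
      mem_oddDiagram.2 ⟨hia, hiP, hipar⟩
    rw [← hD] at hmem
    have h3 := (mem_oddDiagram.1 hmem).2.1
    rw [hva] at h3
    simp at h3
  -- w.symm (v 0) ≠ 0
  have hP0 : (w.symm (v 0) : ℕ) ≠ 0 := by
    intro h0
    have h1 : w.symm (v 0) = 0 := Fin.ext h0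
    have h2 := congrArg w h1
    rw [Equiv.apply_symm_apply] at h2
    omega
  -- even
  have hPe : (w.symm (v 0) : ℕ) % 2 = 0 := by
    by_contra hodd
    have h1 := h2a 0 (by simp only [Fin.val_zero]; omega) (by simp only [Fin.val_zero]; omega)
    omega
  have hP2 : 2 ≤ (w.symm (v 0) : ℕ) := by omega
  have hPn : (w.symm (v 0) : ℕ) < n + 1 := (w.symm (v 0)).isLt
  have hn2 : 2 ≤ n := by omega
  have hw1 : (w ⟨1, by omega⟩ : ℕ) < (v 0 : ℕ) := by
    refine h2a ⟨1, by omega⟩ ?_ ?_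
    · simp only [Fin.val_mk]; omega
    · simp only [Fin.val_mk]; omega
  -- step 3 : w 0 is the maximum value n
  have htop : ∀ j : Fin (n+1), (w j : ℕ) ≤ (w 0 : ℕ) := by
    intro j
    by_contra hgt
    push_neg at hgt
    have hj0 : (j : ℕ) ≠ 0 := by
      intro h0
      have h1 : j = 0 := Fin.ext h0
      rw [h1] at hgt
      omega
    have hj1 : (1 : ℕ) < (j : ℕ) := by
      rcases Nat.lt_trichotomy 1 (j : ℕ) with h' | h' | h'
      · exact h'
      · exfalso
        have h1 : j = ⟨1, by omega⟩ := Fin.ext h'.symm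
        rw [h1] at hgt
        omega
      · omega
    refine hw ⟨0, ⟨1, by omega⟩, j, ?_, ?_, ?_, ?_⟩
    · exact Fin.lt_def.2 (by simp)
    · exact Fin.lt_def.2 (by simpa using hj1)
    · exact Fin.lt_def.2 (by omega)
    · exact Fin.lt_def.2 hgt
  have hw0 : (w 0 : ℕ) = n := by
    have h1 := htop (w.symm ⟨n, by omega⟩)
    rw [Equiv.apply_symm_apply] at h1
    have h2 : (w 0 : ℕ) < n + 1 := (w 0).isLt
    simp only [Fin.val_mk] at h1
    omega
  -- step 5 : row 0 counting
  have hmemv : ∀ j : Fin (n+1), (((0, j) : Fin (n+1) × Fin (n+1)) ∈ oddDiagram v ↔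
      ((v.symm j : ℕ) % 2 = 1 ∧ (n+1) - (v 0 : ℕ) ≤ (v.symm j : ℕ))) := by
    intro j
    simp only [mem_oddDiagram, Fin.val_zero]
    constructor
    · rintro ⟨h1, h2, h3⟩
      exact ⟨by omega, (avoid_block_iff hv j).1 h1⟩
    · rintro ⟨h1, h2⟩
      exact ⟨(avoid_block_iff hv j).2 h2, by omega, by omega⟩
  have hmemw : ∀ j : Fin (n+1), (((0, j) : Fin (n+1) × Fin (n+1)) ∈ oddDiagram w ↔
      (w.symm j : ℕ) % 2 = 1) := by
    intro j
    simp only [mem_oddDiagram, Fin.val_zero]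
    constructor
    · rintro ⟨h1, h2, h3⟩
      omega
    · intro h1
      have hj0 : (w.symm j : ℕ) ≠ 0 := by omega
      have hjn : (j : ℕ) ≠ n := by
        intro h'
        have h2 : j = w 0 := Fin.ext (by omega)
        have h3 : w.symm j = 0 := by rw [h2]; simp
        rw [h3] at hj0
        simp at hj0
      have hjlt : (j : ℕ) < n + 1 := j.isLt
      refine ⟨by omega, by omega, by omega⟩
  have hSeq : (univ.filter fun j : Fin (n+1) =>
        ((0, j) : Fin (n+1) × Fin (n+1)) ∈ oddDiagram v)
      = (univ.filter fun j : Fin (n+1) =>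
        ((0, j) : Fin (n+1) × Fin (n+1)) ∈ oddDiagram w) := by
    rw [hD]
  have hcv : (univ.filter fun j : Fin (n+1) =>
        ((0, j) : Fin (n+1) × Fin (n+1)) ∈ oddDiagram v).card
      = (univ.filter fun m : Fin (n+1) =>
        ((m : ℕ) % 2 = 1 ∧ (n+1) - (v 0 : ℕ) ≤ (m : ℕ))).card := by
    rw [Finset.filter_congr (fun j _ => by rw [hmemv j])]
    exact card_filter_perm v.symm (fun m => (m : ℕ) % 2 = 1 ∧ (n+1) - (v 0 : ℕ) ≤ (m : ℕ))
  have hcw : (univ.filter fun j : Fin (n+1) =>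
        ((0, j) : Fin (n+1) × Fin (n+1)) ∈ oddDiagram w).card
      = (univ.filter fun m : Fin (n+1) => (m : ℕ) % 2 = 1).card := by
    rw [Finset.filter_congr (fun j _ => by rw [hmemw j])]
    exact card_filter_perm w.symm (fun m => (m : ℕ) % 2 = 1)
  have hsub : (univ.filter fun m : Fin (n+1) =>
      ((m : ℕ) % 2 = 1 ∧ (n+1) - (v 0 : ℕ) ≤ (m : ℕ))) ⊆
      (univ.filter fun m : Fin (n+1) => (m : ℕ) % 2 = 1) := by
    intro m hm
    simp only [Finset.mem_filter, Finset.mem_univ, true_and] at hm ⊢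
    exact hm.1
  have honemem : (⟨1, by omega⟩ : Fin (n+1)) ∈
      (univ.filter fun m : Fin (n+1) => (m : ℕ) % 2 = 1) := by
    simp only [Finset.mem_filter, Finset.mem_univ, true_and, Fin.val_mk]
  have honenot : (⟨1, by omega⟩ : Fin (n+1)) ∉
      (univ.filter fun m : Fin (n+1) =>
        ((m : ℕ) % 2 = 1 ∧ (n+1) - (v 0 : ℕ) ≤ (m : ℕ))) := by
    simp only [Finset.mem_filter, Finset.mem_univ, true_and, Fin.val_mk, not_and]
    intro _
    omega
  have hstrict := Finset.card_lt_card
    (Finset.ssubset_iff_of_subset hsub |>.2 ⟨_, honemem, honenot⟩)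
  have hfinal : (univ.filter fun m : Fin (n+1) =>
      ((m : ℕ) % 2 = 1 ∧ (n+1) - (v 0 : ℕ) ≤ (m : ℕ))).card
      = (univ.filter fun m : Fin (n+1) => (m : ℕ) % 2 = 1).card := by
    rw [← hcv, ← hcw, hSeq]
  omega

lemma first_eq {n : ℕ} {v w : Perm (Fin (n+1))} (hv : ¬ contains213 v)
    (hw : ¬ contains213 w) (hD : oddDiagram v = oddDiagram w) : v 0 = w 0 := by
  have h1 := first_val_not_lt hv hw hD
  have h2 := first_val_not_lt hw hv hD.symm
  exact Fin.ext (by omega)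

/-- delete position 0 and value `v 0` from a permutation -/
def reduce {n : ℕ} (v : Perm (Fin (n+1))) : Perm (Fin n) :=
  Equiv.removeNone (((finSuccEquiv' 0).symm.trans v).trans (finSuccEquiv' (v 0)))

lemma reduce_spec {n : ℕ} (v : Perm (Fin (n+1))) (i : Fin n) :
    v i.succ = (v 0).succAbove (reduce v i) := by
  set a := v 0 with ha
  set E := ((finSuccEquiv' 0).symm.trans v).trans (finSuccEquiv' a) with hE
  have hne : v i.succ ≠ a := fun h => (Fin.succ_ne_zero i) (v.injective h)
  have hEsome : E (some i) = finSuccEquiv' a (v i.succ) := by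
    simp [hE, finSuccEquiv'_symm_some, Fin.succAbove_zero]
  obtain ⟨y, hy⟩ : ∃ y, finSuccEquiv' a (v i.succ) = some y := by
    rcases h : finSuccEquiv' a (v i.succ) with _ | y
    · exfalso
      have := (finSuccEquiv' a).injective (h.trans (finSuccEquiv'_at a).symm)
      exact hne this
    · exact ⟨y, rfl⟩
  have hsome : some (reduce v i) = E (some i) :=
    Equiv.removeNone_some E ⟨y, by rw [hEsome]; exact hy⟩
  rw [hEsome] at hsome
  have := congrArg (finSuccEquiv' a).symm hsome
  rw [Equiv.symm_apply_apply, finSuccEquiv'_symm_some] at this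
  exact this.symm

lemma reduce_symm_spec {n : ℕ} (v : Perm (Fin (n+1))) (j : Fin n) :
    v.symm ((v 0).succAbove j) = ((reduce v).symm j).succ := by
  have h := reduce_spec v ((reduce v).symm j)
  rw [Equiv.apply_symm_apply] at h
  rw [← h, Equiv.symm_apply_apply]

lemma reduce_avoid {n : ℕ} {v : Perm (Fin (n+1))} (hv : ¬ contains213 v) :
    ¬ contains213 (reduce v) := by
  rintro ⟨i, h, j, h1, h2, h3, h4⟩
  refine hv ⟨i.succ, h.succ, j.succ, ?_, ?_, ?_, ?_⟩
  · exact Fin.succ_lt_succ_iff.2 h1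
  · exact Fin.succ_lt_succ_iff.2 h2
  · rw [reduce_spec, reduce_spec]
    exact Fin.succAbove_lt_succAbove_iff.2 h3
  · rw [reduce_spec, reduce_spec]
    exact Fin.succAbove_lt_succAbove_iff.2 h4

lemma coe_succAbove_le {n : ℕ} (a : Fin (n+1)) (j : Fin n) :
    (j : ℕ) ≤ (a.succAbove j : ℕ) ∧ (a.succAbove j : ℕ) ≤ (j : ℕ) + 1 := by
  rcases Fin.lt_or_le (Fin.castSucc j) a with h | h
  · rw [Fin.succAbove_of_castSucc_lt a j h]
    simp
  · rw [Fin.succAbove_of_le_castSucc a j h]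
    simp

lemma reduce_diagram_mem {n : ℕ} (v : Perm (Fin (n+1))) (i j : Fin n) :
    (i, j) ∈ oddDiagram (reduce v) ↔
      (i.succ, (v 0).succAbove j) ∈ oddDiagram v := by
  rw [mem_oddDiagram, mem_oddDiagram]
  dsimp only
  have h1 : (j : ℕ) < ((reduce v) i : ℕ) ↔
      (((v 0).succAbove j : ℕ) < (v i.succ : ℕ)) := by
    rw [reduce_spec]
    constructor
    · intro h
      exact Fin.lt_def.1 (Fin.succAbove_lt_succAbove_iff.2 (Fin.lt_def.2 h))
    · intro h
      exact Fin.lt_def.1 (Fin.succAbove_lt_succAbove_iff.1 (Fin.lt_def.2 h))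
  have h2 : (v.symm ((v 0).succAbove j) : ℕ) = ((reduce v).symm j : ℕ) + 1 := by
    rw [reduce_symm_spec]
    simp
  constructor
  · rintro ⟨ha, hb, hc⟩
    refine ⟨h1.1 ha, ?_, ?_⟩
    · rw [h2]; simp; omega
    · rw [h2]; simp; omega
  · rintro ⟨ha, hb, hc⟩
    rw [h2] at hb hc
    simp at hb hc
    exact ⟨h1.2 ha, by omega, by omega⟩

lemma inj213 : ∀ (n : ℕ) (v w : Perm (Fin n)), ¬ contains213 v → ¬ contains213 w →
    oddDiagram v = oddDiagram w → v = w := by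
  intro n
  induction n with
  | zero =>
    intro v w _ _ _
    ext x
    exact x.elim0
  | succ m ih =>
    intro v w hv hw hD
    have h0 : v 0 = w 0 := first_eq hv hw hD
    have hred : reduce v = reduce w := by
      refine ih _ _ (reduce_avoid hv) (reduce_avoid hw) ?_
      ext p
      obtain ⟨i, j⟩ := p
      rw [reduce_diagram_mem, reduce_diagram_mem, hD, h0]
    ext x
    refine Fin.cases ?_ ?_ x
    · exact congrArg Fin.val h0
    · intro i
      have h1 : v i.succ = (v 0).succAbove (reduce v i) := reduce_spec v i
      have h2 : w i.succ = (w 0).succAbove (reduce w i) := reduce_spec w i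
      rw [h1, h2, h0, hred]

theorem stmt2 {n : ℕ} (v w : Equiv.Perm (Fin n)) (hv : ¬ contains213 v)
    (hw : ¬ contains213 w) (hne : v ≠ w) :
    oddDiagram v ≠ oddDiagram w := by
  intro hD
  exact hne (inj213 n v w hv hw hD)
end

section
/- The number of distinct odd diagrams of permutations in S_n is at least the n-th Bell number B_n. -/
def bell : ℕ → ℕ
  | 0 => 1
  | (n+1) => ∑ k ∈ (Finset.range (n+1)).attach, Nat.choose n k.1 * bell k.1
decreasing_by exact Nat.lt_succ_of_le (Nat.le_of_lt_succ (Finset.mem_range.mp k.2))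

namespace OddBell

open Finset Equiv

variable {n : ℕ}

open Finset Equiv

variable {n : ℕ}

def Avoids (w : Equiv.Perm (Fin n)) : Prop :=
  ∀ a b c : Fin n, a < b → (c : ℕ) = (b : ℕ) + 1 → w b < w c → w c < w a → False

lemma mem_oddDiagram {w : Equiv.Perm (Fin n)} {i x : Fin n} :
    (i, x) ∈ oddDiagram w ↔
      (x : ℕ) < (w i : ℕ) ∧ (i : ℕ) < (w.symm x : ℕ) ∧ (i : ℕ) % 2 ≠ (w.symm x : ℕ) % 2 := by
  simp [oddDiagram]

/-- If some cell exists in column `x`, then `(pos(x) - 1, x)` is a cell. -/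
lemma key {w : Equiv.Perm (Fin n)} (hw : Avoids w) {x i : Fin n}
    (hi : (i : ℕ) < (w.symm x : ℕ)) (hxi : (x : ℕ) < (w i : ℕ)) :
    (⟨(w.symm x : ℕ) - 1, lt_of_le_of_lt (Nat.sub_le _ _) (w.symm x).isLt⟩, x) ∈ oddDiagram w := by
  set p := w.symm x with hp
  have hp1 : 1 ≤ (p : ℕ) := Nat.one_le_iff_ne_zero.mpr (by omega)
  set b : Fin n := ⟨(p : ℕ) - 1, lt_of_le_of_lt (Nat.sub_le _ _) p.isLt⟩ with hb
  have hbp : b ≠ p := by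
    intro h
    have := congrArg (fun y : Fin n => (y : ℕ)) h
    simp only [hb] at this
    omega
  have hwp : w p = x := w.apply_symm_apply x
  have hib : (i : ℕ) ≤ (b : ℕ) := by simp only [hb]; omega
  have hwbx : w b ≠ x := by
    intro h
    exact hbp (w.injective (by rw [h, hwp]))
  rcases lt_or_gt_of_ne (fun h : (w b : ℕ) = (x : ℕ) => hwbx (Fin.ext h)) with h | h
  · -- w b < x : avoidance violated with (i, b, p)
    exfalso
    have hibne : i ≠ b := by
      intro he; rw [he] at hxi; omega
    have hiltb : i < b := lt_of_le_of_ne (by exact hib) (fun he => hibne (Fin.ext (by exact_mod_cast congrArg _ he)))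
    exact hw i b p hiltb (by simp [hb]; omega) (by rw [hwp]; exact h) (by rw [hwp]; exact hxi)
  · -- cell (b, x)
    rw [mem_oddDiagram]
    refine ⟨h, by simp [hb]; omega, ?_⟩
    simp only [hb, ← hp]
    omega

lemma key' {w : Equiv.Perm (Fin n)} (hw : Avoids w) {x i : Fin n}
    (h : (i, x) ∈ oddDiagram w) :
    (⟨(w.symm x : ℕ) - 1, lt_of_le_of_lt (Nat.sub_le _ _) (w.symm x).isLt⟩, x) ∈ oddDiagram w := by
  rw [mem_oddDiagram] at h
  exact key hw h.2.1 h.1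

/-- positions of non-left-to-right maxima agree -/
lemma decode_nonmax {u w : Equiv.Perm (Fin n)} (hu : Avoids u) (hw : Avoids w)
    (hD : oddDiagram u = oddDiagram w) {x i : Fin n} (hc : (i, x) ∈ oddDiagram w) :
    u.symm x = w.symm x := by
  have hcu : (i, x) ∈ oddDiagram u := by rw [hD]; exact hc
  have h1 := key' hw hc
  have h2 := key' hu hcu
  have h1u := h1; rw [← hD] at h1u
  have h2w := h2; rw [hD] at h2w
  rw [mem_oddDiagram] at h1u h2w hc hcu
  have a1 : (w.symm x : ℕ) - 1 < (u.symm x : ℕ) := h1u.2.1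
  have a2 : (u.symm x : ℕ) - 1 < (w.symm x : ℕ) := h2w.2.1
  have b1 : (i : ℕ) < (w.symm x : ℕ) := hc.2.1
  have b2 : (i : ℕ) < (u.symm x : ℕ) := hcu.2.1
  exact Fin.ext (by omega)

/-- empty column means left-to-right maximum -/
lemma empty_col {u : Equiv.Perm (Fin n)} (hu : Avoids u) {x : Fin n}
    (h : ∀ i, (i, x) ∉ oddDiagram u) {i : Fin n} (hi : (i : ℕ) < (u.symm x : ℕ)) :
    (u i : ℕ) < (x : ℕ) := by
  by_contra hcon
  have hne : u i ≠ x := by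
    intro he
    have : i = u.symm x := by rw [← he]; simp
    rw [this] at hi; omega
  have hgt : (x : ℕ) < (u i : ℕ) := by
    rcases Nat.lt_or_ge (x : ℕ) (u i : ℕ) with h' | h'
    · exact h'
    · exact absurd (Fin.ext (show ((u i : Fin n) : ℕ) = (x : ℕ) by omega)) hne
  exact h _ (key hu hi hgt)

/-- Two strictly monotone maps from `M` onto `P` agree. -/
lemma strictMonoOn_unique {M P : Finset (Fin n)} {f g : Fin n → Fin n}
    (hfP : ∀ x ∈ M, f x ∈ P) (hgP : ∀ x ∈ M, g x ∈ P)
    (hf : ∀ x ∈ M, ∀ y ∈ M, x < y → f x < f y)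
    (hg : ∀ x ∈ M, ∀ y ∈ M, x < y → g x < g y)
    (hcard : M.card = P.card) : ∀ x ∈ M, f x = g x := by
  have injf : Set.InjOn f M := by
    intro x hx y hy hxy
    by_contra hne
    rcases lt_or_gt_of_ne hne with h | h
    · exact absurd hxy (ne_of_lt (hf x hx y hy h))
    · exact absurd hxy.symm (ne_of_lt (hf y hy x hx h))
  have injg : Set.InjOn g M := by
    intro x hx y hy hxy
    by_contra hne
    rcases lt_or_gt_of_ne hne with h | h
    · exact absurd hxy (ne_of_lt (hg x hx y hy h))
    · exact absurd hxy.symm (ne_of_lt (hg y hy x hx h))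
  have himf : M.image f = P := by
    apply Finset.eq_of_subset_of_card_le
    · intro q hq
      rcases Finset.mem_image.mp hq with ⟨x, hx, rfl⟩
      exact hfP x hx
    · rw [Finset.card_image_of_injOn injf, hcard]
  have himg : M.image g = P := by
    apply Finset.eq_of_subset_of_card_le
    · intro q hq
      rcases Finset.mem_image.mp hq with ⟨x, hx, rfl⟩
      exact hgP x hx
    · rw [Finset.card_image_of_injOn injg, hcard]
  -- rank equality
  have rank : ∀ (f : Fin n → Fin n), (∀ x ∈ M, ∀ y ∈ M, x < y → f x < f y) →
      M.image f = P → ∀ x ∈ M, (P.filter (· ≤ f x)).card = (M.filter (· ≤ x)).card := by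
    intro f hf him x hx
    have injf : Set.InjOn f M := by
      intro a ha b hb hab
      by_contra hne
      rcases lt_or_gt_of_ne hne with h | h
      · exact absurd hab (ne_of_lt (hf a ha b hb h))
      · exact absurd hab.symm (ne_of_lt (hf b hb a ha h))
    have : P.filter (· ≤ f x) = (M.filter (· ≤ x)).image f := by
      ext q
      constructor
      · intro hq
        rcases Finset.mem_filter.mp hq with ⟨hqP, hqle⟩
        rw [← him] at hqP
        rcases Finset.mem_image.mp hqP with ⟨y, hy, rfl⟩
        refine Finset.mem_image.mpr ⟨y, Finset.mem_filter.mpr ⟨hy, ?_⟩, rfl⟩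
        by_contra hyx
        exact absurd hqle (not_le.mpr (hf x hx y hy (not_le.mp hyx)))
      · intro hq
        rcases Finset.mem_image.mp hq with ⟨y, hy, rfl⟩
        rcases Finset.mem_filter.mp hy with ⟨hyM, hyx⟩
        refine Finset.mem_filter.mpr ⟨him ▸ Finset.mem_image_of_mem f hyM, ?_⟩
        rcases eq_or_lt_of_le hyx with rfl | h
        · exact le_refl _
        · exact le_of_lt (hf y hyM x hx h)
    rw [this, Finset.card_image_of_injOn (injf.mono (by intro a ha; exact Finset.mem_filter.mp ha |>.1))]
  intro x hx
  have h1 := rank f hf himf x hx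
  have h2 := rank g hg himg x hx
  by_contra hne
  have haux : ∀ (a b : Fin n), a ∈ P → b ∈ P → a < b →
      (P.filter (· ≤ a)).card ≠ (P.filter (· ≤ b)).card := by
    intro a b haP hbP hab
    apply ne_of_lt
    apply Finset.card_lt_card
    constructor
    · intro q hq
      rcases Finset.mem_filter.mp hq with ⟨h1, h2⟩
      exact Finset.mem_filter.mpr ⟨h1, le_trans h2 (le_of_lt hab)⟩
    · intro hsub
      have : b ∈ P.filter (· ≤ a) := hsub (Finset.mem_filter.mpr ⟨hbP, le_refl _⟩)
      exact absurd (Finset.mem_filter.mp this).2 (not_le.mpr hab)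
  rcases lt_or_gt_of_ne hne with h | h
  · exact haux _ _ (hfP x hx) (hgP x hx) h (h1.trans h2.symm)
  · exact haux _ _ (hgP x hx) (hfP x hx) h (h2.trans h1.symm)

/-- odd diagrams are injective on 3-12-avoiding permutations -/
theorem avoids_inj {u w : Equiv.Perm (Fin n)} (hu : Avoids u) (hw : Avoids w)
    (hD : oddDiagram u = oddDiagram w) : u = w := by
  classical
  set M : Finset (Fin n) := Finset.univ.filter (fun x => ∀ i, (i, x) ∉ oddDiagram u) with hM
  have hnm : ∀ x ∉ M, u.symm x = w.symm x := by
    intro x hx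
    simp only [hM, Finset.mem_filter, Finset.mem_univ, true_and, not_forall, not_not] at hx
    rcases hx with ⟨i, hi⟩
    exact decode_nonmax hu hw hD (hD ▸ hi)
  -- position sets
  set Q : Finset (Fin n) := (Finset.univ \ M).image (fun x => u.symm x) with hQ
  have hQ' : Q = (Finset.univ \ M).image (fun x => w.symm x) := by
    apply Finset.image_congr
    intro x hx
    exact hnm x (Finset.mem_sdiff.mp hx).2
  set P : Finset (Fin n) := Finset.univ \ Q with hP
  have hcardQ : Q.card = (Finset.univ \ M).card :=
    Finset.card_image_of_injOn (fun a _ b _ hab => u.symm.injective hab)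
  have hcard : M.card = P.card := by
    rw [hP, Finset.card_sdiff_of_subset (Finset.subset_univ _), hcardQ,
      Finset.card_sdiff_of_subset (Finset.subset_univ _)]
    simp only [Finset.card_univ]
    have := Finset.card_le_univ M
    omega
  have hmaps : ∀ x ∈ M, u.symm x ∈ P := by
    intro x hx
    rw [hP, Finset.mem_sdiff]
    refine ⟨Finset.mem_univ _, ?_⟩
    intro hmem
    rcases Finset.mem_image.mp hmem with ⟨y, hy, he⟩
    have : y = x := u.symm.injective he
    rw [this] at hy
    exact (Finset.mem_sdiff.mp hy).2 hx
  have hmaps' : ∀ x ∈ M, w.symm x ∈ P := by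
    intro x hx
    rw [hP, hQ', Finset.mem_sdiff]
    refine ⟨Finset.mem_univ _, ?_⟩
    intro hmem
    rcases Finset.mem_image.mp hmem with ⟨y, hy, he⟩
    have : y = x := w.symm.injective he
    rw [this] at hy
    exact (Finset.mem_sdiff.mp hy).2 hx
  have hmemM : ∀ x ∈ M, ∀ i : Fin n, (i : ℕ) < (u.symm x : ℕ) → (u i : ℕ) < (x : ℕ) := by
    intro x hx
    have := (Finset.mem_filter.mp hx).2
    exact fun i hi => empty_col hu this hi
  have hmemMw : ∀ x ∈ M, ∀ i : Fin n, (i : ℕ) < (w.symm x : ℕ) → (w i : ℕ) < (x : ℕ) := by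
    intro x hx
    have h2 := (Finset.mem_filter.mp hx).2
    have : ∀ i, (i, x) ∉ oddDiagram w := by rw [← hD]; exact h2
    exact fun i hi => empty_col hw this hi
  have hmono : ∀ x ∈ M, ∀ y ∈ M, x < y → u.symm x < u.symm y := by
    intro x hx y hy hxy
    by_contra hcon
    rcases eq_or_lt_of_le (not_lt.mp hcon) with he | hlt
    · exact absurd (u.symm.injective he.symm) (ne_of_lt hxy)
    · have := hmemM x hx (u.symm y) hlt
      rw [Equiv.apply_symm_apply] at this
      omega
  have hmonow : ∀ x ∈ M, ∀ y ∈ M, x < y → w.symm x < w.symm y := by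
    intro x hx y hy hxy
    by_contra hcon
    rcases eq_or_lt_of_le (not_lt.mp hcon) with he | hlt
    · exact absurd (w.symm.injective he.symm) (ne_of_lt hxy)
    · have := hmemMw x hx (w.symm y) hlt
      rw [Equiv.apply_symm_apply] at this
      omega
  have hall : ∀ x, u.symm x = w.symm x := by
    intro x
    by_cases hx : x ∈ M
    · exact strictMonoOn_unique hmaps hmaps' hmono hmonow hcard x hx
    · exact hnm x hx
  apply Equiv.ext
  intro i
  have := hall (u i)
  rw [Equiv.symm_apply_apply] at this
  have h2 := congrArg w this
  rw [Equiv.apply_symm_apply] at h2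
  exact h2.symm


instance {n : ℕ} : DecidablePred (Avoids (n := n)) := fun _ => by
  unfold Avoids; infer_instance

def Avset (n : ℕ) : Finset (Equiv.Perm (Fin n)) := Finset.univ.filter Avoids

def Bset {n : ℕ} (S : Finset (Fin n)) : Finset (Fin (n + 1)) :=
  Finset.univ \ S.image Fin.castSucc

lemma Bset_card {S : Finset (Fin n)} {k : ℕ} (hS : S.card = k) :
    (Bset S).card = n + 1 - k := by
  rw [Bset, Finset.card_sdiff_of_subset (Finset.subset_univ _), Finset.card_univ,
    Finset.card_image_of_injective _ (Fin.castSucc_injective n), hS, Fintype.card_fin]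

lemma sub_lt_aux {k : ℕ} {i : Fin (n + 1)} (h : ¬ (i : ℕ) < k) : n - (i : ℕ) < n + 1 - k := by
  have := i.isLt; omega

def buildFun (S : Finset (Fin n)) {k : ℕ} (hS : S.card = k) (u : Equiv.Perm (Fin k)) :
    Fin (n + 1) → Fin (n + 1) := fun i =>
  if h : (i : ℕ) < k then Fin.castSucc (S.orderEmbOfFin hS (u ⟨i, h⟩))
  else (Bset S).orderEmbOfFin (Bset_card hS) ⟨n - i, sub_lt_aux h⟩

lemma buildFun_injective (S : Finset (Fin n)) {k : ℕ} (hS : S.card = k)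
    (u : Equiv.Perm (Fin k)) : Function.Injective (buildFun S hS u) := by
  intro i j hij
  unfold buildFun at hij
  by_cases hi : (i : ℕ) < k <;> by_cases hj : (j : ℕ) < k
  · rw [dif_pos hi, dif_pos hj] at hij
    have h1 := (S.orderEmbOfFin hS).injective (Fin.castSucc_injective n hij)
    have h2 := u.injective h1
    exact Fin.ext (congrArg Fin.val h2 : _)
  · rw [dif_pos hi, dif_neg hj] at hij
    exfalso
    have hmem : Fin.castSucc (S.orderEmbOfFin hS (u ⟨i, hi⟩)) ∈ S.image Fin.castSucc :=
      Finset.mem_image_of_mem _ (Finset.orderEmbOfFin_mem S hS _)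
    have hmem2 := Finset.orderEmbOfFin_mem (Bset S) (Bset_card hS) ⟨n - j, sub_lt_aux hj⟩
    rw [← hij] at hmem2
    exact (Finset.mem_sdiff.mp hmem2).2 hmem
  · rw [dif_neg hi, dif_pos hj] at hij
    exfalso
    have hmem : Fin.castSucc (S.orderEmbOfFin hS (u ⟨j, hj⟩)) ∈ S.image Fin.castSucc :=
      Finset.mem_image_of_mem _ (Finset.orderEmbOfFin_mem S hS _)
    have hmem2 := Finset.orderEmbOfFin_mem (Bset S) (Bset_card hS) ⟨n - i, sub_lt_aux hi⟩
    rw [hij] at hmem2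
    exact (Finset.mem_sdiff.mp hmem2).2 hmem
  · rw [dif_neg hi, dif_neg hj] at hij
    have h1 := ((Bset S).orderEmbOfFin (Bset_card hS)).injective hij
    have h2 : n - (i : ℕ) = n - (j : ℕ) := congrArg Fin.val h1
    have hin := i.isLt
    have hjn := j.isLt
    exact Fin.ext (by omega)

noncomputable def buildPerm (S : Finset (Fin n)) {k : ℕ} (hS : S.card = k) (u : Equiv.Perm (Fin k)) :
    Equiv.Perm (Fin (n + 1)) :=
  Equiv.ofBijective _ (Finite.injective_iff_bijective.mp (buildFun_injective S hS u))

lemma buildPerm_apply (S : Finset (Fin n)) {k : ℕ} (hS : S.card = k) (u : Equiv.Perm (Fin k))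
    (i : Fin (n + 1)) : buildPerm S hS u i = buildFun S hS u i := rfl

lemma Bset_max {S : Finset (Fin n)} {k : ℕ} (hS : S.card = k) (hk : k ≤ n) :
    ((Bset S).orderEmbOfFin (Bset_card hS)) ⟨n - k, by omega⟩ = Fin.last n := by
  have hlast : Fin.last n ∈ Bset S := by
    rw [Bset, Finset.mem_sdiff]
    refine ⟨Finset.mem_univ _, ?_⟩
    intro hmem
    rcases Finset.mem_image.mp hmem with ⟨y, _, he⟩
    exact absurd (congrArg Fin.val he) (by simp [Fin.last]; omega)
  have hne : (Bset S).Nonempty := ⟨_, hlast⟩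
  have : ((Bset S).orderEmbOfFin (Bset_card hS)) ⟨n + 1 - k - 1, by omega⟩ = (Bset S).max' hne :=
    Finset.orderEmbOfFin_last (Bset_card hS) (by omega)
  have hmax : (Bset S).max' hne = Fin.last n :=
    le_antisymm (Finset.max'_le _ _ _ (fun y _ => Fin.le_last y)) (Finset.le_max' _ _ hlast)
  have hidx : (⟨n + 1 - k - 1, by omega⟩ : Fin (n + 1 - k)) = ⟨n - k, by omega⟩ :=
    Fin.mk_eq_mk.mpr (by omega)
  rw [← hidx, this, hmax]

lemma build_at_k {S : Finset (Fin n)} {k : ℕ} (hS : S.card = k) (u : Equiv.Perm (Fin k))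
    (hkn : k < n + 1) : buildPerm S hS u ⟨k, hkn⟩ = Fin.last n := by
  rw [buildPerm_apply, buildFun, dif_neg (by simp)]
  exact Bset_max hS (by omega)


lemma build_avoids {S : Finset (Fin n)} {k : ℕ} (hS : S.card = k) {u : Equiv.Perm (Fin k)}
    (hu : Avoids u) : Avoids (buildPerm S hS u) := by
  intro a b c hab hc h1 h2
  set w := buildPerm S hS u with hw
  have hkn : k ≤ n := hS ▸ (by simpa using S.card_le_univ)
  rcases lt_trichotomy (c : ℕ) k with hck | hck | hck
  · -- all in prefix
    have hbk : (b : ℕ) < k := by omega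
    have hak : (a : ℕ) < k := by omega
    have hlt : ∀ (i j : Fin (n+1)) (hi : (i:ℕ) < k) (hj : (j:ℕ) < k),
        w i < w j ↔ u ⟨i, hi⟩ < u ⟨j, hj⟩ := by
      intro i j hi hj
      rw [hw, buildPerm_apply, buildPerm_apply, buildFun, buildFun, dif_pos hi, dif_pos hj]
      rw [Fin.castSucc_lt_castSucc_iff]
      exact (S.orderEmbOfFin hS).lt_iff_lt
    have e1 := (hlt b c hbk hck).mp h1
    have e2 := (hlt c a hck hak).mp h2
    exact hu ⟨a, hak⟩ ⟨b, hbk⟩ ⟨c, hck⟩ hab (by simpa using hc) e1 e2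
  · -- c = k : w c = last
    have : w c = Fin.last n := by
      have : c = ⟨k, by omega⟩ := Fin.ext (by simp only [Fin.val_mk]; omega)
      rw [this]
      exact build_at_k hS u (by omega)
    rw [this] at h2
    exact absurd h2 (not_lt.mpr (Fin.le_last _))
  · -- b, c both in suffix: decreasing
    have hbk : ¬ (b : ℕ) < k := by omega
    have hck' : ¬ (c : ℕ) < k := by omega
    have : w c < w b := by
      rw [hw, buildPerm_apply, buildPerm_apply, buildFun, buildFun, dif_neg hbk, dif_neg hck']
      rw [((Bset S).orderEmbOfFin (Bset_card hS)).lt_iff_lt]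
      have hcn := c.isLt
      exact Fin.mk_lt_mk.mpr (by omega)
    exact absurd h1 (not_lt.mpr (le_of_lt this))


lemma filter_lt_card (k : ℕ) (hk : k < n + 1) :
    (Finset.univ.filter (fun i : Fin (n + 1) => (i : ℕ) < k)).card = k := by
  have : (Finset.univ.filter (fun i : Fin (n + 1) => (i : ℕ) < k)) =
      Finset.Iio (⟨k, hk⟩ : Fin (n + 1)) := by
    ext i
    simp [Fin.lt_def]
  rw [this, Fin.card_Iio]

lemma build_prefix_image {S : Finset (Fin n)} {k : ℕ} (hS : S.card = k)
    (u : Equiv.Perm (Fin k)) :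
    S.image Fin.castSucc =
      (Finset.univ.filter (fun i : Fin (n + 1) => (i : ℕ) < k)).image (buildPerm S hS u) := by
  have hk : k ≤ n := hS ▸ (by simpa using S.card_le_univ)
  symm
  apply Finset.eq_of_subset_of_card_le
  · intro x hx
    rcases Finset.mem_image.mp hx with ⟨i, hi, rfl⟩
    have hik : (i : ℕ) < k := (Finset.mem_filter.mp hi).2
    rw [buildPerm_apply, buildFun, dif_pos hik]
    exact Finset.mem_image_of_mem _ (Finset.orderEmbOfFin_mem S hS _)
  · rw [Finset.card_image_of_injective _ (Fin.castSucc_injective n), hS,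
      Finset.card_image_of_injective _ (buildPerm S hS u).injective, filter_lt_card k (by omega)]

lemma build_inj {S S' : Finset (Fin n)} {k : ℕ} (hS : S.card = k) (hS' : S'.card = k)
    {u u' : Equiv.Perm (Fin k)} (h : buildPerm S hS u = buildPerm S' hS' u') :
    S = S' ∧ u = u' := by
  have hSS : S = S' := by
    have h1 := build_prefix_image hS u
    have h2 := build_prefix_image hS' u'
    rw [h] at h1
    exact Finset.image_injective (Fin.castSucc_injective n) (h1.trans h2.symm)
  subst hSS
  refine ⟨rfl, ?_⟩
  apply Equiv.ext
  intro t
  have htk : (t : ℕ) < k := t.isLt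
  have hk : k ≤ n := hS ▸ (by simpa using S.card_le_univ)
  have := congrFun (congrArg (fun (w : Equiv.Perm (Fin (n+1))) => (w : Fin (n+1) → Fin (n+1))) h)
    ⟨(t : ℕ), by omega⟩
  simp only [buildPerm, Equiv.ofBijective_apply, buildFun, dif_pos htk] at this
  have h3 := (S.orderEmbOfFin hS).injective (Fin.castSucc_injective n this)
  have h4 : u ⟨(t : ℕ), htk⟩ = u' ⟨(t : ℕ), htk⟩ := by
    convert h3 using 2
  convert h4 using 2

lemma build_symm_last {S : Finset (Fin n)} {k : ℕ} (hS : S.card = k) (u : Equiv.Perm (Fin k))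
    (hkn : k < n + 1) : (buildPerm S hS u).symm (Fin.last n) = ⟨k, hkn⟩ :=
  Equiv.symm_apply_eq _ |>.mpr (build_at_k hS u hkn).symm


noncomputable def psi (m : ℕ) (k : ℕ) :
    Finset (Fin m) × Equiv.Perm (Fin k) → Equiv.Perm (Fin (m + 1)) := fun q =>
  if h : q.1.card = k then buildPerm q.1 h q.2 else 1

noncomputable def PsiSet (m : ℕ) (k : ℕ) : Finset (Equiv.Perm (Fin (m + 1))) :=
  ((Finset.univ.powersetCard k) ×ˢ (Avset k)).image (psi m k)

lemma mem_PsiSet {m k : ℕ} {w : Equiv.Perm (Fin (m + 1))} (hw : w ∈ PsiSet m k) :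
    ∃ (S : Finset (Fin m)) (h : S.card = k) (u : Equiv.Perm (Fin k)),
      Avoids u ∧ w = buildPerm S h u := by
  rcases Finset.mem_image.mp hw with ⟨q, hq, rfl⟩
  rcases Finset.mem_product.mp hq with ⟨hq1, hq2⟩
  have hcard : q.1.card = k := (Finset.mem_powersetCard.mp hq1).2
  exact ⟨q.1, hcard, q.2, (Finset.mem_filter.mp hq2).2, by rw [psi, dif_pos hcard]⟩

lemma PsiSet_card {m k : ℕ} :
    (PsiSet m k).card = Nat.choose m k * (Avset (n := k)).card := by
  rw [PsiSet, Finset.card_image_of_injOn, Finset.card_product, Finset.card_powersetCard,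
    Finset.card_univ, Fintype.card_fin]
  intro q hq q' hq' he
  rcases Finset.mem_coe.mp hq |> Finset.mem_product.mp with ⟨h1, h2⟩
  rcases Finset.mem_coe.mp hq' |> Finset.mem_product.mp with ⟨h1', h2'⟩
  have hc : q.1.card = k := (Finset.mem_powersetCard.mp h1).2
  have hc' : q'.1.card = k := (Finset.mem_powersetCard.mp h1').2
  rw [psi, psi, dif_pos hc, dif_pos hc'] at he
  have := build_inj hc hc' he
  exact Prod.ext this.1 this.2

lemma PsiSet_subset {m k : ℕ} : PsiSet m k ⊆ Avset (m + 1) := by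
  intro w hw
  rcases mem_PsiSet hw with ⟨S, h, u, hu, rfl⟩
  exact Finset.mem_filter.mpr ⟨Finset.mem_univ _, build_avoids h hu⟩

lemma PsiSet_disj {m : ℕ} {k k' : ℕ} (hk : k < m + 1) (hk' : k' < m + 1) (hne : k ≠ k') :
    Disjoint (PsiSet m k) (PsiSet m k') := by
  rw [Finset.disjoint_left]
  intro w hw hw'
  rcases mem_PsiSet hw with ⟨S, h, u, _, rfl⟩
  rcases mem_PsiSet hw' with ⟨S', h', u', _, he⟩
  have e1 := build_symm_last h u hk
  have e2 := build_symm_last h' u' hk'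
  rw [← he] at e2
  rw [e1] at e2
  exact hne (by simpa using congrArg Fin.val e2)

theorem bell_le_Avset (n : ℕ) : bell n ≤ (Avset n).card := by
  induction n using Nat.strong_induction_on with
  | _ n ih =>
    cases n with
    | zero =>
      rw [bell]
      refine Finset.card_pos.mpr ⟨1, Finset.mem_filter.mpr ⟨Finset.mem_univ _, ?_⟩⟩
      intro a
      exact a.elim0
    | succ m =>
      rw [bell]
      calc ∑ k ∈ (Finset.range (m + 1)).attach, Nat.choose m k.1 * bell k.1
          ≤ ∑ k ∈ (Finset.range (m + 1)).attach, (PsiSet m k.1).card := by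
            apply Finset.sum_le_sum
            intro k _
            rw [PsiSet_card]
            exact Nat.mul_le_mul_left _ (ih k.1 (Finset.mem_range.mp k.2))
        _ = ((Finset.range (m + 1)).attach.biUnion (fun k => PsiSet m k.1)).card := by
            rw [Finset.card_biUnion]
            intro x _ y _ hxy
            exact PsiSet_disj (Finset.mem_range.mp x.2) (Finset.mem_range.mp y.2)
              (fun h => hxy (Subtype.ext h))
        _ ≤ (Avset (m + 1)).card := by
            apply Finset.card_le_card
            intro w hw
            rcases Finset.mem_biUnion.mp hw with ⟨k, _, hk⟩
            exact PsiSet_subset hk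


end OddBell

theorem stmt4 (n : ℕ) :
    bell n ≤ ((Finset.univ : Finset (Equiv.Perm (Fin n))).image (fun w => oddDiagram w)).card := by
  have h1 : bell n ≤ (OddBell.Avset n).card := OddBell.bell_le_Avset n
  have hinj : Set.InjOn (fun w => oddDiagram w) ((OddBell.Avset n : Finset (Equiv.Perm (Fin n))) : Set (Equiv.Perm (Fin n))) := by
    intro u hu v hv he
    exact OddBell.avoids_inj (Finset.mem_filter.mp hu).2 (Finset.mem_filter.mp hv).2 he
  have h2 : (OddBell.Avset n).card = ((OddBell.Avset n).image (fun w => oddDiagram w)).card :=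
    (Finset.card_image_of_injOn hinj).symm
  have h3 : ((OddBell.Avset n).image (fun w => oddDiagram w)).card ≤
      ((Finset.univ : Finset (Equiv.Perm (Fin n))).image (fun w => oddDiagram w)).card :=
    Finset.card_le_card (Finset.image_subset_image (Finset.filter_subset _ _))
  omega
end

section
/- Let v in S_n and let v̄ = v·(i j) with i < j, and set m = min{v(i), v(j)}, M = max{v(i), v(j)}. Then D_o(v) = D_o(v̄) if and only if: (R1) i ≡ j (mod 2); (R2) v(x) < m for all x in {i+1, i+3, ..., j-1}; and (R3) v(y) ∉ [m, M] for all y in {j+1, j+3, ...} ∩ [n]. -/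
theorem stmt5 {n : ℕ} (v : Equiv.Perm (Fin n)) (i j : Fin n) (hij : i < j) :
    oddDiagram (v * Equiv.swap i j) = oddDiagram v ↔
      ((i : ℕ) % 2 = (j : ℕ) % 2 ∧
       (∀ x : Fin n, i < x → x < j → (x : ℕ) % 2 ≠ (i : ℕ) % 2 → v x < min (v i) (v j)) ∧
       (∀ y : Fin n, j < y → (y : ℕ) % 2 ≠ (j : ℕ) % 2 →
          ¬ (min (v i) (v j) ≤ v y ∧ v y ≤ max (v i) (v j)))) := by
  have hij' : i ≠ j := ne_of_lt hij
  have hijN : (i : ℕ) < (j : ℕ) := hij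
  have hmem : ∀ (w : Equiv.Perm (Fin n)) (p q : Fin n),
      ((p, q) ∈ oddDiagram w ↔
        ((q : ℕ) < (w p : ℕ) ∧ (p : ℕ) < (w.symm q : ℕ) ∧ (p : ℕ) % 2 ≠ (w.symm q : ℕ) % 2)) := by
    intro w p q; simp [oddDiagram]
  set a := v i with ha
  set b := v j with hb
  have hab : a ≠ b := fun h => hij' (v.injective h)
  have hw_i : (v * Equiv.swap i j) i = b := by
    simp [Equiv.Perm.mul_apply, hb]
  have hw_j : (v * Equiv.swap i j) j = a := by
    simp [Equiv.Perm.mul_apply, ha]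
  have hw_o : ∀ p : Fin n, p ≠ i → p ≠ j → (v * Equiv.swap i j) p = v p := by
    intro p h1 h2
    simp [Equiv.Perm.mul_apply, Equiv.swap_apply_of_ne_of_ne h1 h2]
  have hvs_a : v.symm a = i := Equiv.symm_apply_apply v i
  have hvs_b : v.symm b = j := Equiv.symm_apply_apply v j
  have hwsymm : ∀ q : Fin n, (v * Equiv.swap i j).symm q = Equiv.swap i j (v.symm q) :=
    fun q => rfl
  have hws_a : (v * Equiv.swap i j).symm a = j := by
    rw [hwsymm, hvs_a, Equiv.swap_apply_left]
  have hws_b : (v * Equiv.swap i j).symm b = i := by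
    rw [hwsymm, hvs_b, Equiv.swap_apply_right]
  have hvs_o : ∀ q : Fin n, q ≠ a → q ≠ b → v.symm q ≠ i ∧ v.symm q ≠ j := by
    intro q h1 h2
    refine ⟨fun h => h1 ?_, fun h => h2 ?_⟩
    · rw [← v.apply_symm_apply q, h, ← ha]
    · rw [← v.apply_symm_apply q, h, ← hb]
  have hws_o : ∀ q : Fin n, q ≠ a → q ≠ b → (v * Equiv.swap i j).symm q = v.symm q := by
    intro q h1 h2
    rw [hwsymm, Equiv.swap_apply_of_ne_of_ne (hvs_o q h1 h2).1 (hvs_o q h1 h2).2]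
  constructor
  · -- equality → conditions
    intro heq
    have hcell : ∀ p q : Fin n,
        ((p, q) ∈ oddDiagram (v * Equiv.swap i j) ↔ (p, q) ∈ oddDiagram v) := by
      intro p q; rw [heq]
    -- R1
    have hR1 : (i : ℕ) % 2 = (j : ℕ) % 2 := by
      by_contra hpar
      rcases hab.lt_or_gt with h1 | h1
      · have hm : (i, a) ∈ oddDiagram (v * Equiv.swap i j) := by
          rw [hmem, hw_i, hws_a]
          exact ⟨h1, hijN, hpar⟩
        have h2 := ((hmem v i a).mp ((hcell i a).mp hm)).1
        rw [← ha] at h2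
        omega
      · have hm : (i, b) ∈ oddDiagram v := by
          rw [hmem, hvs_b, ← ha]
          exact ⟨h1, hijN, hpar⟩
        have h2 := ((hmem _ i b).mp ((hcell i b).mpr hm)).1
        rw [hw_i] at h2
        omega
    refine ⟨hR1, ?_, ?_⟩
    · -- R2
      intro x hix hxj hpar
      have hxi : x ≠ i := ne_of_gt hix
      have hxj' : x ≠ j := ne_of_lt hxj
      have hixN : (i : ℕ) < (x : ℕ) := hix
      have hxjN : (x : ℕ) < (j : ℕ) := hxj
      have hvx_a : v x ≠ a := fun h => hxi (v.injective h)
      have hvx_b : v x ≠ b := fun h => hxj' (v.injective h)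
      have hparj : (x : ℕ) % 2 ≠ (j : ℕ) % 2 := by omega
      by_contra hge
      rw [lt_min_iff, not_and_or, not_lt, not_lt] at hge
      rcases hab.lt_or_gt with h1 | h1
      · have hlt : (a : ℕ) < (v x : ℕ) := by
          have h2 : a ≤ v x := by
            rcases hge with h | h
            · exact h
            · exact le_trans (le_of_lt h1) h
          exact lt_of_le_of_ne h2 (fun h => hvx_a (Fin.ext h.symm))
        have hm : (x, a) ∈ oddDiagram (v * Equiv.swap i j) := by
          rw [hmem, hw_o x hxi hxj', hws_a]
          exact ⟨hlt, hxjN, hparj⟩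
        have h3 := ((hmem v x a).mp ((hcell x a).mp hm)).2.1
        rw [hvs_a] at h3
        omega
      · have hlt : (b : ℕ) < (v x : ℕ) := by
          have h2 : b ≤ v x := by
            rcases hge with h | h
            · exact le_trans (le_of_lt h1) h
            · exact h
          exact lt_of_le_of_ne h2 (fun h => hvx_b (Fin.ext h.symm))
        have hm : (x, b) ∈ oddDiagram v := by
          rw [hmem, hvs_b]
          exact ⟨hlt, hxjN, hparj⟩
        have h3 := ((hmem _ x b).mp ((hcell x b).mpr hm)).2.1
        rw [hws_b] at h3
        omega
    · -- R3
      rintro y hjy hpar ⟨hmin, hmax⟩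
      have hyi : y ≠ i := ne_of_gt (lt_trans hij hjy)
      have hyj : y ≠ j := ne_of_gt hjy
      have hjyN : (j : ℕ) < (y : ℕ) := hjy
      have hiyN : (i : ℕ) < (y : ℕ) := lt_trans hijN hjyN
      have hvy_a : v y ≠ a := fun h => hyi (v.injective h)
      have hvy_b : v y ≠ b := fun h => hyj (v.injective h)
      have hvs_vy : v.symm (v y) = y := Equiv.symm_apply_apply v y
      have hpari : (i : ℕ) % 2 ≠ (y : ℕ) % 2 := by omega
      rcases hab.lt_or_gt with h1 | h1
      · rw [min_eq_left (le_of_lt h1)] at hmin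
        rw [max_eq_right (le_of_lt h1)] at hmax
        have hlo : (a : ℕ) < (v y : ℕ) := lt_of_le_of_ne hmin (fun h => hvy_a (Fin.ext h.symm))
        have hhi : (v y : ℕ) < (b : ℕ) := lt_of_le_of_ne hmax (fun h => hvy_b (Fin.ext h))
        have hm : (i, v y) ∈ oddDiagram (v * Equiv.swap i j) := by
          rw [hmem, hw_i, hws_o _ hvy_a hvy_b, hvs_vy]
          exact ⟨hhi, hiyN, hpari⟩
        have h3 := ((hmem v i (v y)).mp ((hcell i (v y)).mp hm)).1
        rw [← ha] at h3
        omega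
      · rw [min_eq_right (le_of_lt h1)] at hmin
        rw [max_eq_left (le_of_lt h1)] at hmax
        have hlo : (b : ℕ) < (v y : ℕ) := lt_of_le_of_ne hmin (fun h => hvy_b (Fin.ext h.symm))
        have hhi : (v y : ℕ) < (a : ℕ) := lt_of_le_of_ne hmax (fun h => hvy_a (Fin.ext h))
        have hm : (i, v y) ∈ oddDiagram v := by
          rw [hmem, hvs_vy, ← ha]
          exact ⟨hhi, hiyN, hpari⟩
        have h3 := ((hmem _ i (v y)).mp ((hcell i (v y)).mpr hm)).1
        rw [hw_i] at h3
        omega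
  · -- conditions → equality
    rintro ⟨hR1, hR2, hR3⟩
    have hR2' : ∀ x : Fin n, (i : ℕ) < (x : ℕ) → (x : ℕ) < (j : ℕ) →
        (x : ℕ) % 2 ≠ (i : ℕ) % 2 → (v x : ℕ) < (a : ℕ) ∧ (v x : ℕ) < (b : ℕ) := by
      intro x h1 h2 h3
      have h4 := hR2 x h1 h2 h3
      rw [lt_min_iff] at h4
      exact ⟨h4.1, h4.2⟩
    have hR3' : ∀ y : Fin n, (j : ℕ) < (y : ℕ) → (y : ℕ) % 2 ≠ (j : ℕ) % 2 →
        ((v y : ℕ) < (a : ℕ) ∧ (v y : ℕ) < (b : ℕ)) ∨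
        ((a : ℕ) < (v y : ℕ) ∧ (b : ℕ) < (v y : ℕ)) := by
      intro y h1 h2
      have h := hR3 y h1 h2
      rcases lt_or_ge (v y) (min a b) with h3 | h3
      · left; rw [lt_min_iff] at h3; exact ⟨h3.1, h3.2⟩
      · right
        have h4 : ¬ v y ≤ max a b := fun h5 => h ⟨h3, h5⟩
        rw [not_le, max_lt_iff] at h4
        exact ⟨h4.1, h4.2⟩
    apply Finset.ext
    rintro ⟨p, q⟩
    rw [hmem, hmem]
    by_cases hpi : p = i
    · rw [hpi]
      rw [hw_i]
      by_cases hqa : q = a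
      · rw [hqa, hws_a, hvs_a, ← ha]
        omega
      · by_cases hqb : q = b
        · rw [hqb, hws_b, hvs_b, ← ha]
          omega
        · rw [hws_o q hqa hqb, ← ha]
          obtain ⟨hx_i, hx_j⟩ := hvs_o q hqa hqb
          set x := v.symm q with hx
          have hvx : v x = q := v.apply_symm_apply q
          rcases lt_trichotomy ((x : ℕ)) ((j : ℕ)) with hxc | hxc | hxc
          · by_cases hcase : (i : ℕ) < (x : ℕ) ∧ (i : ℕ) % 2 ≠ (x : ℕ) % 2
            · have h2 := hR2' x hcase.1 hxc (fun h => hcase.2 h.symm)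
              rw [hvx] at h2
              omega
            · omega
          · exact absurd (Fin.ext hxc) hx_j
          · by_cases hcase : (i : ℕ) % 2 ≠ (x : ℕ) % 2
            · have h3 := hR3' x hxc (by omega)
              rw [hvx] at h3
              omega
            · omega
    · by_cases hpj : p = j
      · rw [hpj]
        rw [hw_j]
        by_cases hqa : q = a
        · rw [hqa, hws_a, hvs_a, ← hb]
          omega
        · by_cases hqb : q = b
          · rw [hqb, hws_b, hvs_b, ← hb]
            omega
          · rw [hws_o q hqa hqb, ← hb]
            set x := v.symm q with hx
            have hvx : v x = q := v.apply_symm_apply q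
            by_cases hcase : (j : ℕ) < (x : ℕ) ∧ (j : ℕ) % 2 ≠ (x : ℕ) % 2
            · have h3 := hR3' x hcase.1 (fun h => hcase.2 h.symm)
              rw [hvx] at h3
              omega
            · omega
      · have hpiN : (p : ℕ) ≠ (i : ℕ) := fun h => hpi (Fin.ext h)
        have hpjN : (p : ℕ) ≠ (j : ℕ) := fun h => hpj (Fin.ext h)
        rw [hw_o p hpi hpj]
        by_cases hqa : q = a
        · rw [hqa, hws_a, hvs_a]
          by_cases hcase : (i : ℕ) < (p : ℕ) ∧ (p : ℕ) < (j : ℕ) ∧ (p : ℕ) % 2 ≠ (i : ℕ) % 2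
          · have h2 := hR2' p hcase.1 hcase.2.1 hcase.2.2
            omega
          · omega
        · by_cases hqb : q = b
          · rw [hqb, hws_b, hvs_b]
            by_cases hcase : (i : ℕ) < (p : ℕ) ∧ (p : ℕ) < (j : ℕ) ∧ (p : ℕ) % 2 ≠ (i : ℕ) % 2
            · have h2 := hR2' p hcase.1 hcase.2.1 hcase.2.2
              omega
            · omega
          · rw [hws_o q hqa hqb]
end

section
/- If v ≠ v̄ are permutations in S_n that differ by a single transposition (i.e., v̄ = v·(i j) for some i < j with v(i) ≠ v(j)) and have the same odd diagram, then the positions i, j-1, j carry values forming a 213-pattern in one of the two permutations and a 312-pattern in the other. In particular, any legal Bruhat edge is a pattern swap. -/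
theorem stmt6 {n : ℕ} (v : Equiv.Perm (Fin n)) (i j : Fin n) (hij : i < j)
    (h : oddDiagram v = oddDiagram (v * Equiv.swap i j)) :
    (i : ℕ) + 2 ≤ (j : ℕ) ∧
      ∀ h' : Fin n, (h' : ℕ) + 1 = (j : ℕ) →
        ((v h' < v i ∧ v i < v j) ∨ (v h' < v j ∧ v j < v i)) := by
  classical
  set vb := v * Equiv.swap i j with hvb
  have H : ∀ a b : Fin n,
      (((b:ℕ) < (v a:ℕ) ∧ (a:ℕ) < ((v.symm b:Fin n):ℕ) ∧ (a:ℕ)%2 ≠ ((v.symm b:Fin n):ℕ)%2) ↔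
       ((b:ℕ) < (vb a:ℕ) ∧ (a:ℕ) < ((vb.symm b:Fin n):ℕ) ∧ (a:ℕ)%2 ≠ ((vb.symm b:Fin n):ℕ)%2)) := by
    intro a b
    have := Finset.ext_iff.mp h (a, b)
    simpa [oddDiagram] using this
  have hne : i ≠ j := ne_of_lt hij
  have hijn : (i:ℕ) < (j:ℕ) := hij
  have hvbi : vb i = v j := by simp [hvb, Equiv.Perm.mul_apply]
  have hvbj : vb j = v i := by simp [hvb, Equiv.Perm.mul_apply]
  have hsymm : ∀ b : Fin n, vb.symm b = Equiv.swap i j (v.symm b) := by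
    intro b
    symm
    rw [Equiv.eq_symm_apply]
    simp [hvb, Equiv.Perm.mul_apply, Equiv.swap_apply_self]
  have hsa : vb.symm (v i) = j := by rw [hsymm]; simp
  have hsb : vb.symm (v j) = i := by rw [hsymm]; simp
  have hvij : (v i : ℕ) ≠ (v j : ℕ) := by
    intro hc
    exact hne (v.injective (Fin.val_injective hc))
  -- parity
  have hpar : (i:ℕ) % 2 = (j:ℕ) % 2 := by
    by_contra hp
    rcases lt_or_gt_of_ne hvij with hlt | hgt
    · have := (H i (v i)).mpr ⟨by rw [hvbi]; exact hlt, by rw [hsa]; exact hijn,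
        by rw [hsa]; exact hp⟩
      simp at this
    · have := (H i (v j)).mp ⟨hgt, by simp [hijn], by simp; exact hp⟩
      rw [hvbi] at this
      omega
  refine ⟨by omega, ?_⟩
  intro h' hh'
  have hih' : (i:ℕ) < (h':ℕ) := by omega
  have hh'j : (h':ℕ) < (j:ℕ) := by omega
  have hh'i : h' ≠ i := Fin.ne_of_val_ne (by omega)
  have hh'j' : h' ≠ j := Fin.ne_of_val_ne (by omega)
  have hvbh : vb h' = v h' := by
    simp [hvb, Equiv.Perm.mul_apply, Equiv.swap_apply_of_ne_of_ne hh'i hh'j']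
  have hsh : vb.symm (v h') = h' := by
    rw [hsymm]; simp [Equiv.swap_apply_of_ne_of_ne hh'i hh'j']
  have hvhi : (v h' : ℕ) ≠ (v i : ℕ) := by
    intro hc; exact hh'i (v.injective (Fin.val_injective hc))
  have hvhj : (v h' : ℕ) ≠ (v j : ℕ) := by
    intro hc; exact hh'j' (v.injective (Fin.val_injective hc))
  have hparh : (i:ℕ) % 2 ≠ (h':ℕ) % 2 := by omega
  have hparhj : (h':ℕ) % 2 ≠ (j:ℕ) % 2 := by omega
  rcases lt_or_gt_of_ne hvij with hab | hba
  · -- v i < v j : show v h' < v i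
    left
    have key : (v h' : ℕ) < (v i : ℕ) := by
      by_contra hk
      push_neg at hk
      rcases lt_or_gt_of_ne hvhj with hmid | hhi
      · -- v i < v h' < v j
        have := (H i (v h')).mpr ⟨by rw [hvbi]; exact hmid, by rw [hsh]; exact hih',
          by rw [hsh]; exact hparh⟩
        simp at this
        omega
      · -- v j < v h'
        have := (H h' (v j)).mp ⟨hhi, by simp [hh'j], by simp; exact hparhj⟩
        rw [hsb] at this
        omega
    exact ⟨key, hab⟩
  · -- v j < v i : show v h' < v j
    right
    have key : (v h' : ℕ) < (v j : ℕ) := by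
      by_contra hk
      push_neg at hk
      rcases lt_or_gt_of_ne hvhi with hmid | hhi
      · -- v j < v h' < v i
        have := (H i (v h')).mp ⟨hmid, by simp [hih'], by simp; exact hparh⟩
        rw [hvbi] at this
        omega
      · -- v i < v h'
        have := (H h' (v i)).mpr ⟨by rw [hvbh]; exact hhi, by rw [hsa]; exact hh'j,
          by rw [hsa]; exact hparhj⟩
        simp at this
        omega
    exact ⟨key, hba⟩
end

section
/- If v ~ w (same odd diagram) agree for the first k values but not the (k+1)-st (i.e., v^{-1}(i) = w^{-1}(i) for all i ≤ k but v^{-1}(k+1) ≠ w^{-1}(k+1)), then the permutation v̄ obtained from v by transposing positions v^{-1}(k+1) and w^{-1}(k+1) satisfies D_o(v̄) = D_o(v) and v̄^{-1}(i) = w^{-1}(i) for all i ≤ k+1. -/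
theorem stmt8 {n : ℕ} (v w : Equiv.Perm (Fin n)) (hsim : oddDiagram v = oddDiagram w)
    (k : Fin n) (hagree : ∀ i : Fin n, i < k → v.symm i = w.symm i)
    (hk : v.symm k ≠ w.symm k) :
    oddDiagram (v * Equiv.swap (v.symm k) (w.symm k)) = oddDiagram v ∧
      ∀ i : Fin n, i ≤ k →
        (v * Equiv.swap (v.symm k) (w.symm k)).symm i = w.symm i := by
  classical
  have vne : ∀ {x y : Fin n}, x ≠ y → (x : ℕ) ≠ (y : ℕ) := fun h h' => h (Fin.ext h')
  have hva : v (v.symm k) = k := v.apply_symm_apply k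
  have hwb : w (w.symm k) = k := w.apply_symm_apply k
  have hab : v.symm k ≠ w.symm k := hk
  have hcol : ∀ i j : Fin n,
      ((j : ℕ) < (v i : ℕ) ∧ (i : ℕ) < (v.symm j : ℕ) ∧
        (i : ℕ) % 2 ≠ (v.symm j : ℕ) % 2) ↔
      ((j : ℕ) < (w i : ℕ) ∧ (i : ℕ) < (w.symm j : ℕ) ∧
        (i : ℕ) % 2 ≠ (w.symm j : ℕ) % 2) := by
    intro i j
    simpa [oddDiagram] using Finset.ext_iff.mp hsim (i, j)
  -- values below k are at the same positions
  have hlow : ∀ i : Fin n, (v i : ℕ) < (k : ℕ) → w i = v i := by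
    intro i h
    have h2 := hagree (v i) (Fin.lt_def.mpr h)
    rw [Equiv.symm_apply_apply] at h2
    calc w i = w (w.symm (v i)) := congrArg w h2
      _ = v i := w.apply_symm_apply _
  have hlow' : ∀ i : Fin n, (w i : ℕ) < (k : ℕ) → v i = w i := by
    intro i h
    have h2 := (hagree (w i) (Fin.lt_def.mpr h)).symm
    rw [Equiv.symm_apply_apply] at h2
    calc v i = v (v.symm (w i)) := congrArg v h2
      _ = w i := v.apply_symm_apply _
  -- v i ≠ k, w i ≠ k away from the special positions
  have hvnk : ∀ i : Fin n, i ≠ v.symm k → (v i : ℕ) ≠ (k : ℕ) := by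
    intro i hi h
    apply hi
    have : v i = k := Fin.ext h
    rw [← this, Equiv.symm_apply_apply]
  have hwnk : ∀ i : Fin n, i ≠ w.symm k → (w i : ℕ) ≠ (k : ℕ) := by
    intro i hi h
    apply hi
    have : w i = k := Fin.ext h
    rw [← this, Equiv.symm_apply_apply]
  -- c := v (w.symm k) > k
  have hc : (k : ℕ) < (v (w.symm k) : ℕ) := by
    have hne : (v (w.symm k) : ℕ) ≠ (k : ℕ) := by
      apply hvnk
      intro h
      exact hab (by rw [h])
    by_contra hcon
    have hlt : (v (w.symm k) : ℕ) < (k : ℕ) := by omega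
    have := hlow _ hlt
    rw [hwb] at this
    exact hne (by rw [← this])
  -- d := w (v.symm k) > k
  have hd : (k : ℕ) < (w (v.symm k) : ℕ) := by
    have hne : (w (v.symm k) : ℕ) ≠ (k : ℕ) := by
      apply hwnk
      intro h
      exact hab (by rw [h])
    by_contra hcon
    have hlt : (w (v.symm k) : ℕ) < (k : ℕ) := by omega
    have := hlow' _ hlt
    rw [hva] at this
    exact hne (by rw [← this])
  -- k < v i ↔ k < w i away from special positions
  have hiff : ∀ i : Fin n, i ≠ v.symm k → i ≠ w.symm k →
      ((k : ℕ) < (v i : ℕ) ↔ (k : ℕ) < (w i : ℕ)) := by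
    intro i hia hib
    have h1 := hvnk i hia
    have h2 := hwnk i hib
    constructor
    · intro h
      by_contra hcon
      have : (w i : ℕ) < (k : ℕ) := by omega
      have := hlow' i this
      rw [this] at h
      omega
    · intro h
      by_contra hcon
      have : (v i : ℕ) < (k : ℕ) := by omega
      have := hlow i this
      rw [this] at h
      omega
  -- parity of a and b agree
  have hpar : ((v.symm k : Fin n) : ℕ) % 2 = ((w.symm k : Fin n) : ℕ) % 2 := by
    by_contra hp
    rcases lt_trichotomy (v.symm k) (w.symm k) with h | h | h
    · have := ((hcol (v.symm k) k).mpr ⟨hd, Fin.lt_def.mp h, hp⟩).2.1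
      omega
    · exact hab h
    · have := ((hcol (w.symm k) k).mp ⟨hc, Fin.lt_def.mp h,
        fun h' => hp h'.symm⟩).2.1
      omega
  -- claim 2 : positions strictly between a and b of the right parity hold values < k
  have claim2 : ∀ i : Fin n, (i : ℕ) % 2 ≠ ((v.symm k : Fin n) : ℕ) % 2 →
      ((((v.symm k : Fin n) : ℕ) < (i : ℕ) ∧ (i : ℕ) < ((w.symm k : Fin n) : ℕ)) ∨
       (((w.symm k : Fin n) : ℕ) < (i : ℕ) ∧ (i : ℕ) < ((v.symm k : Fin n) : ℕ))) →
      (v i : ℕ) < (k : ℕ) := by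
    intro i hpi hcase
    rcases hcase with ⟨h1, h2⟩ | ⟨h1, h2⟩
    · -- a < i < b
      have hib : i ≠ w.symm k := fun h => by rw [h] at h2; omega
      have hnw : (w i : ℕ) ≠ (k : ℕ) := hwnk i hib
      have hnotin : ¬ ((k : ℕ) < (v i : ℕ) ∧ (i : ℕ) < (v.symm k : ℕ) ∧
          (i : ℕ) % 2 ≠ (v.symm k : ℕ) % 2) := fun ⟨_, hlt, _⟩ => by omega
      have hnotin' := (hcol i k).not.mp hnotin
      have : ¬ ((k : ℕ) < (w i : ℕ)) := by
        intro hgt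
        exact hnotin' ⟨hgt, h2, by omega⟩
      have hwlt : (w i : ℕ) < (k : ℕ) := by omega
      rw [hlow' i hwlt]
      exact hwlt
    · -- b < i < a
      have hia : i ≠ v.symm k := fun h => by rw [h] at h2; omega
      have hnv : (v i : ℕ) ≠ (k : ℕ) := hvnk i hia
      have hnotin : ¬ ((k : ℕ) < (w i : ℕ) ∧ (i : ℕ) < (w.symm k : ℕ) ∧
          (i : ℕ) % 2 ≠ (w.symm k : ℕ) % 2) := fun ⟨_, hlt, _⟩ => by omega
      have hnotin' := (hcol i k).not.mpr hnotin
      have : ¬ ((k : ℕ) < (v i : ℕ)) := by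
        intro hgt
        exact hnotin' ⟨hgt, h2, hpi⟩
      omega
  -- claim 3 : if k < j < v b and v.symm j has parity ≠ a, then v.symm j < b
  have claim3 : ∀ j : Fin n, (k : ℕ) < (j : ℕ) → (j : ℕ) < (v (w.symm k) : ℕ) →
      ((v.symm j : ℕ)) % 2 ≠ ((v.symm k : Fin n) : ℕ) % 2 →
      ((v.symm j : Fin n) : ℕ) < ((w.symm k : Fin n) : ℕ) := by
    intro j h1 h2 hp
    have hnotin : ¬ ((j : ℕ) < (w (w.symm k) : ℕ) ∧ ((w.symm k : Fin n) : ℕ) < (w.symm j : ℕ) ∧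
        ((w.symm k : Fin n) : ℕ) % 2 ≠ (w.symm j : ℕ) % 2) := by
      rintro ⟨hlt, -, -⟩
      rw [hwb] at hlt
      omega
    have hnotin' := (hcol (w.symm k) j).not.mpr hnotin
    have hne : ((v.symm j : Fin n) : ℕ) ≠ ((w.symm k : Fin n) : ℕ) := by
      apply vne
      intro h
      have := congrArg v h
      rw [Equiv.apply_symm_apply] at this
      omega
    have : ¬ (((w.symm k : Fin n) : ℕ) < (v.symm j : ℕ)) := by
      intro hgt
      exact hnotin' ⟨h2, hgt, by omega⟩
    omega
  -- the symm of the product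
  have hsymm : ∀ x : Fin n, (v * Equiv.swap (v.symm k) (w.symm k)).symm x =
      Equiv.swap (v.symm k) (w.symm k) (v.symm x) := by
    intro x
    rw [Equiv.symm_apply_eq]
    simp [Equiv.Perm.mul_apply]
  constructor
  · -- diagram equality
    apply Finset.ext
    rintro ⟨i, j⟩
    simp only [oddDiagram, Finset.mem_filter, Finset.mem_univ, true_and,
      Equiv.Perm.mul_apply, hsymm]
    by_cases hj1 : j = k
    · rw [hj1, Equiv.swap_apply_left]
      by_cases hia : i = v.symm k
      · subst hia
        constructor
        · rintro ⟨-, -, h3⟩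
          exact absurd hpar h3
        · rintro ⟨h1, -, -⟩
          rw [hva] at h1
          omega
      · by_cases hib : i = w.symm k
        · subst hib
          rw [Equiv.swap_apply_right, hva]
          constructor
          · rintro ⟨h1, -, -⟩
            omega
          · rintro ⟨-, -, h3⟩
            exact absurd hpar.symm h3
        · rw [Equiv.swap_apply_of_ne_of_ne hia hib]
          constructor
          · rintro ⟨h1, h2, h3⟩
            exact (hcol i k).mpr ⟨(hiff i hia hib).mp h1, h2, h3⟩
          · intro h
            obtain ⟨h1, h2, h3⟩ := (hcol i k).mp h
            exact ⟨(hiff i hia hib).mpr h1, h2, h3⟩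
    · by_cases hj2 : j = v (w.symm k)
      · have hr : v.symm j = w.symm k := by rw [hj2, Equiv.symm_apply_apply]
        have hkj : (k : ℕ) < (j : ℕ) := by rw [hj2]; exact hc
        rw [hr, Equiv.swap_apply_right]
        by_cases hia : i = v.symm k
        · subst hia
          rw [Equiv.swap_apply_left]
          constructor
          · rintro ⟨h1, -, -⟩
            rw [hj2] at h1
            omega
          · rintro ⟨h1, -, -⟩
            rw [hva] at h1
            omega
        · by_cases hib : i = w.symm k
          · subst hib
            rw [Equiv.swap_apply_right, hva]
            constructor
            · rintro ⟨h1, -, -⟩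
              omega
            · rintro ⟨-, h2, -⟩
              omega
          · rw [Equiv.swap_apply_of_ne_of_ne hia hib]
            constructor
            · rintro ⟨h1, h2, h3⟩
              refine ⟨h1, ?_, by omega⟩
              by_contra hcon
              have hbi : ((w.symm k : Fin n) : ℕ) < (i : ℕ) := by
                have := vne hib; omega
              have := claim2 i h3 (Or.inr ⟨hbi, h2⟩)
              omega
            · rintro ⟨h1, h2, h3⟩
              have h3' : (i : ℕ) % 2 ≠ ((v.symm k : Fin n) : ℕ) % 2 := by omega
              refine ⟨h1, ?_, h3'⟩
              by_contra hcon
              have hai : ((v.symm k : Fin n) : ℕ) < (i : ℕ) := by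
                have := vne hia; omega
              have := claim2 i h3' (Or.inl ⟨hai, h2⟩)
              omega
      · -- j ∉ {k, v b}
        have hrna : v.symm j ≠ v.symm k := by
          intro h
          have := congrArg v h
          rw [Equiv.apply_symm_apply, Equiv.apply_symm_apply] at this
          exact hj1 this
        have hrnb : v.symm j ≠ w.symm k := by
          intro h
          have := congrArg v h
          rw [Equiv.apply_symm_apply] at this
          exact hj2 this
        rw [Equiv.swap_apply_of_ne_of_ne hrna hrnb]
        have hjk : (j : ℕ) ≠ (k : ℕ) := vne hj1
        by_cases hia : i = v.symm k
        · subst hia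
          rw [Equiv.swap_apply_left, hva]
          constructor
          · rintro ⟨h1, h2, h3⟩
            refine ⟨?_, h2, h3⟩
            by_contra hcon
            have hkj : (k : ℕ) < (j : ℕ) := by omega
            have h5 := claim3 j hkj h1 (fun h => h3 h.symm)
            have h6 := claim2 (v.symm j) (fun h => h3 h.symm) (Or.inl ⟨h2, h5⟩)
            rw [Equiv.apply_symm_apply] at h6
            omega
          · rintro ⟨h1, h2, h3⟩
            exact ⟨by omega, h2, h3⟩
        · by_cases hib : i = w.symm k
          · subst hib
            rw [Equiv.swap_apply_right, hva]
            constructor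
            · rintro ⟨h1, h2, h3⟩
              exact ⟨by omega, h2, h3⟩
            · rintro ⟨h1, h2, h3⟩
              refine ⟨?_, h2, h3⟩
              by_contra hcon
              have hkj : (k : ℕ) < (j : ℕ) := by omega
              have h5 := claim3 j hkj h1 (by omega)
              omega
          · rw [Equiv.swap_apply_of_ne_of_ne hia hib]
  · -- agreement up to k
    intro i hi
    rw [hsymm]
    rcases lt_or_eq_of_le hi with h | h
    · have h2 := hagree i h
      have hne1 : v.symm i ≠ v.symm k := fun hh => (ne_of_lt h) (by
        have := congrArg v hh
        rwa [Equiv.apply_symm_apply, Equiv.apply_symm_apply] at this)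
      have hne2 : v.symm i ≠ w.symm k := by
        rw [h2]
        intro hh
        have := congrArg w hh
        rw [Equiv.apply_symm_apply, Equiv.apply_symm_apply] at this
        exact (ne_of_lt h) this
      rw [Equiv.swap_apply_of_ne_of_ne hne1 hne2]
      exact h2
    · subst h
      rw [Equiv.swap_apply_left]
end

section
/- For every odd diagram D and n, the set Perm_n(D) = {w in S_n : D_o(w) = D}, if nonempty, contains at most one 312-avoiding permutation, and if u in Perm_n(D) avoids 312, then u ≤ w in Bruhat order for all w in Perm_n(D). -/
lemma mem_odd {n : ℕ} (w : Equiv.Perm (Fin n)) (a b : Fin n) :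
    (a, b) ∈ oddDiagram w ↔ (b : ℕ) < (w a : ℕ) ∧ (a : ℕ) < (w.symm b : ℕ) ∧
      (a : ℕ) % 2 ≠ (w.symm b : ℕ) % 2 := by
  simp [oddDiagram]

lemma val_ne_of_ne {n : ℕ} {a b : Fin n} (h : a ≠ b) : (a : ℕ) ≠ (b : ℕ) :=
  fun hv => h (Fin.val_injective hv)

lemma oddDiagram_mul_swap {n : ℕ} (w : Equiv.Perm (Fin n)) (i j : Fin n)
    (hij : (i : ℕ) < j) (hval : (w j : ℕ) < w i) (hpar : (i : ℕ) % 2 = (j : ℕ) % 2)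
    (H2 : ∀ k : Fin n, (i : ℕ) < k → (k : ℕ) < j → (k : ℕ) % 2 ≠ (i : ℕ) % 2 → (w k : ℕ) < w j)
    (H3 : ∀ k : Fin n, (j : ℕ) < k → (k : ℕ) % 2 ≠ (i : ℕ) % 2 →
      ¬((w j : ℕ) < w k ∧ (w k : ℕ) < w i)) :
    oddDiagram (w * Equiv.swap i j) = oddDiagram w := by
  have hne : i ≠ j := fun h => by simp [h] at hij
  ext ⟨r, v⟩
  rw [mem_odd, mem_odd]
  have hs : (w * Equiv.swap i j).symm v = Equiv.swap i j (w.symm v) := by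
    simp [Equiv.Perm.mul_def, Equiv.symm_trans_apply]
  have ha : (w * Equiv.swap i j) r = w (Equiv.swap i j r) := rfl
  rw [hs, ha]
  obtain ⟨c, rfl⟩ : ∃ c, w c = v := ⟨w.symm v, w.apply_symm_apply v⟩
  rw [w.symm_apply_apply]
  rcases eq_or_ne r i with hri | hri
  · rw [hri, Equiv.swap_apply_left]
    rcases eq_or_ne c i with hci | hci
    · rw [hci, Equiv.swap_apply_left]
      constructor <;> rintro ⟨h1, h2, h3⟩ <;> omega
    rcases eq_or_ne c j with hcj | hcj
    · rw [hcj, Equiv.swap_apply_right]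
      constructor <;> rintro ⟨h1, h2, h3⟩ <;> omega
    · rw [Equiv.swap_apply_of_ne_of_ne hci hcj]
      have hcj' : (c : ℕ) ≠ j := val_ne_of_ne hcj
      have hwcj : (w c : ℕ) ≠ w j := val_ne_of_ne (w.injective.ne hcj)
      by_cases hp : (c : ℕ) % 2 = (i : ℕ) % 2
      · constructor <;> rintro ⟨h1, h2, h3⟩ <;> omega
      by_cases hic : (i : ℕ) < c
      · rcases lt_or_gt_of_ne hcj' with h | h
        · have := H2 c hic h (by omega)
          constructor <;> rintro ⟨h1, h2, h3⟩ <;> omega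
        · have := H3 c h (by omega)
          constructor <;> rintro ⟨h1, h2, h3⟩ <;> omega
      · constructor <;> rintro ⟨h1, h2, h3⟩ <;> omega
  rcases eq_or_ne r j with hrj | hrj
  · rw [hrj, Equiv.swap_apply_right]
    rcases eq_or_ne c i with hci | hci
    · rw [hci, Equiv.swap_apply_left]
      constructor <;> rintro ⟨h1, h2, h3⟩ <;> omega
    rcases eq_or_ne c j with hcj | hcj
    · rw [hcj, Equiv.swap_apply_right]
      constructor <;> rintro ⟨h1, h2, h3⟩ <;> omega
    · rw [Equiv.swap_apply_of_ne_of_ne hci hcj]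
      have hwcj : (w c : ℕ) ≠ w j := val_ne_of_ne (w.injective.ne hcj)
      by_cases hp : (c : ℕ) % 2 = (i : ℕ) % 2
      · constructor <;> rintro ⟨h1, h2, h3⟩ <;> omega
      by_cases hjc : (j : ℕ) < c
      · have := H3 c hjc (by omega)
        constructor <;> rintro ⟨h1, h2, h3⟩ <;> omega
      · constructor <;> rintro ⟨h1, h2, h3⟩ <;> omega
  · rw [Equiv.swap_apply_of_ne_of_ne hri hrj]
    have hri' : (r : ℕ) ≠ i := val_ne_of_ne hri
    have hrj' : (r : ℕ) ≠ j := val_ne_of_ne hrj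
    rcases eq_or_ne c i with hci | hci
    · rw [hci, Equiv.swap_apply_left]
      by_cases hp : (r : ℕ) % 2 = (i : ℕ) % 2
      · constructor <;> rintro ⟨h1, h2, h3⟩ <;> omega
      by_cases h1 : (i : ℕ) < r
      · by_cases h2 : (r : ℕ) < j
        · have := H2 r h1 h2 (by omega)
          constructor <;> rintro ⟨h1, h2, h3⟩ <;> omega
        · constructor <;> rintro ⟨h1, h2, h3⟩ <;> omega
      · constructor <;> rintro ⟨h1, h2, h3⟩ <;> omega
    rcases eq_or_ne c j with hcj | hcj
    · rw [hcj, Equiv.swap_apply_right]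
      by_cases hp : (r : ℕ) % 2 = (i : ℕ) % 2
      · constructor <;> rintro ⟨h1, h2, h3⟩ <;> omega
      by_cases h1 : (i : ℕ) < r
      · by_cases h2 : (r : ℕ) < j
        · have := H2 r h1 h2 (by omega)
          constructor <;> rintro ⟨h1, h2, h3⟩ <;> omega
        · constructor <;> rintro ⟨h1, h2, h3⟩ <;> omega
      · constructor <;> rintro ⟨h1, h2, h3⟩ <;> omega
    · rw [Equiv.swap_apply_of_ne_of_ne hci hcj]

lemma invLength_mul_swap_lt {n : ℕ} (w : Equiv.Perm (Fin n)) (i j : Fin n)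
    (hij : i < j) (hval : w j < w i) :
    invLength (w * Equiv.swap i j) < invLength w := by
  classical
  have hne : i ≠ j := ne_of_lt hij
  have hij' : (i : ℕ) < j := hij
  have hval' : (w j : ℕ) < w i := hval
  set φ : Fin n × Fin n → Fin n × Fin n := fun p =>
    if (p.1 : ℕ) = (i : ℕ) ∧ (j : ℕ) < (p.2 : ℕ) then (j, p.2)
    else if (p.2 : ℕ) = (i : ℕ) then (p.1, j)
    else if (p.1 : ℕ) = (j : ℕ) then (i, p.2)
    else if (p.2 : ℕ) = (j : ℕ) ∧ (p.1 : ℕ) < (i : ℕ) then (p.1, i)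
    else p with hφ
  have hφφ : ∀ p : Fin n × Fin n, p.1 < p.2 → φ (φ p) = p := by
    rintro ⟨x, y⟩ hxy
    have hxy' : (x : ℕ) < y := hxy
    simp only [hφ]
    split_ifs <;>
      first
        | rfl
        | (dsimp only at *; (try simp only [Prod.mk.injEq, Fin.ext_iff, and_true, true_and]); omega)
  have hmem : (i, j) ∈ Finset.univ.filter
      (fun p : Fin n × Fin n => p.1 < p.2 ∧ w p.2 < w p.1) := by
    simp [hij, hval]
  have hmaps : ∀ p ∈ Finset.univ.filter
      (fun p : Fin n × Fin n => p.1 < p.2 ∧ (w * Equiv.swap i j) p.2 < (w * Equiv.swap i j) p.1),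
      φ p ∈ (Finset.univ.filter
        (fun p : Fin n × Fin n => p.1 < p.2 ∧ w p.2 < w p.1)).erase (i, j) := by
    rintro ⟨x, y⟩ hp
    rw [Finset.mem_filter] at hp
    obtain ⟨-, h1, h2⟩ := hp
    have h1' : (x : ℕ) < y := h1
    rw [Equiv.Perm.mul_apply, Equiv.Perm.mul_apply] at h2
    simp only [Finset.mem_erase, Finset.mem_filter, Finset.mem_univ, true_and, hφ]
    by_cases c1 : (x : ℕ) = (i : ℕ) ∧ (j : ℕ) < (y : ℕ)
    · rw [if_pos c1]
      obtain ⟨cx, cy⟩ := c1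
      have hxi : x = i := Fin.ext cx
      have hyi : y ≠ i := fun h => by rw [h] at cy; omega
      have hyj : y ≠ j := fun h => by rw [h] at cy; omega
      rw [hxi, Equiv.swap_apply_left, Equiv.swap_apply_of_ne_of_ne hyi hyj] at h2
      exact ⟨fun h => hne ((Prod.ext_iff.1 h).1).symm, by exact cy, h2⟩
    rw [if_neg c1]
    by_cases c2 : (y : ℕ) = (i : ℕ)
    · rw [if_pos c2]
      have hyi : y = i := Fin.ext c2
      have hxi : x ≠ i := fun h => by rw [h, ← hyi] at h1'; omega
      have hxj : x ≠ j := fun h => by rw [h] at h1'; omega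
      rw [hyi, Equiv.swap_apply_left, Equiv.swap_apply_of_ne_of_ne hxi hxj] at h2
      refine ⟨fun h => hxi (Prod.ext_iff.1 h).1, ?_, h2⟩
      show x < j
      exact lt_trans (hyi ▸ h1) hij
    rw [if_neg c2]
    by_cases c3 : (x : ℕ) = (j : ℕ)
    · rw [if_pos c3]
      have hxj : x = j := Fin.ext c3
      have hyj : y ≠ j := fun h => by rw [h, ← hxj] at h1'; omega
      have hyi : y ≠ i := fun h => c2 (by rw [h])
      rw [hxj, Equiv.swap_apply_right, Equiv.swap_apply_of_ne_of_ne hyi hyj] at h2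
      refine ⟨fun h => hyj (Prod.ext_iff.1 h).2, ?_, h2⟩
      show i < y
      exact lt_trans hij (hxj ▸ h1)
    rw [if_neg c3]
    by_cases c4 : (y : ℕ) = (j : ℕ) ∧ (x : ℕ) < (i : ℕ)
    · rw [if_pos c4]
      obtain ⟨cy, cx⟩ := c4
      have hyj : y = j := Fin.ext cy
      have hxi : x ≠ i := fun h => by rw [h] at cx; omega
      have hxj : x ≠ j := fun h => by rw [h] at cx; omega
      rw [hyj, Equiv.swap_apply_right, Equiv.swap_apply_of_ne_of_ne hxi hxj] at h2
      refine ⟨fun h => hne (Prod.ext_iff.1 h).2, ?_, h2⟩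
      show x < i
      exact cx
    · rw [if_neg c4]
      by_cases hxi : x = i
      · -- x = i, y ≤ j from ¬c1; y ≠ i; if y = j contradiction with hval
        have hyle : (y : ℕ) ≤ j := by
          by_contra h; exact c1 ⟨by rw [hxi], by omega⟩
        by_cases hyj : y = j
        · exfalso
          rw [hxi, hyj, Equiv.swap_apply_left, Equiv.swap_apply_right] at h2
          have : (w i : ℕ) < w j := h2
          omega
        · have hyi : y ≠ i := fun h => c2 (by rw [h])
          rw [hxi, Equiv.swap_apply_left, Equiv.swap_apply_of_ne_of_ne hyi hyj] at h2
          have h2' : (w y : ℕ) < w j := h2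
          refine ⟨fun h => hyj (Prod.ext_iff.1 h).2, h1, ?_⟩
          show (w y : ℕ) < (w x : ℕ)
          rw [hxi]
          omega
      · by_cases hyj : y = j
        · -- i < x < j
          have hxgt : (i : ℕ) < x := by
            have : ¬((y : ℕ) = j ∧ (x : ℕ) < i) := c4
            have hx' : (x : ℕ) ≠ i := fun h => hxi (Fin.ext h)
            have : ¬((x : ℕ) < i) := fun h => c4 ⟨by rw [hyj], h⟩
            omega
          have hxj : x ≠ j := fun h => c3 (by rw [h])
          rw [hyj, Equiv.swap_apply_right, Equiv.swap_apply_of_ne_of_ne hxi hxj] at h2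
          have h2' : (w i : ℕ) < w x := h2
          refine ⟨fun h => hxi (Prod.ext_iff.1 h).1, h1, ?_⟩
          show (w y : ℕ) < (w x : ℕ)
          rw [hyj]
          omega
        · have hyi : y ≠ i := fun h => c2 (by rw [h])
          have hxj : x ≠ j := fun h => c3 (by rw [h])
          rw [Equiv.swap_apply_of_ne_of_ne hxi hxj, Equiv.swap_apply_of_ne_of_ne hyi hyj] at h2
          refine ⟨?_, h1, h2⟩
          rintro h
          rw [Prod.mk.injEq] at h
          exact hxi h.1
  have hinj : Set.InjOn φ ↑(Finset.univ.filter
      (fun p : Fin n × Fin n => p.1 < p.2 ∧ (w * Equiv.swap i j) p.2 < (w * Equiv.swap i j) p.1)) := by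
    intro p hp q hq h
    simp only [Finset.coe_filter, Set.mem_setOf_eq] at hp hq
    rw [← hφφ p hp.2.1, ← hφφ q hq.2.1, h]
  have hcard := Finset.card_le_card_of_injOn φ hmaps hinj
  calc invLength (w * Equiv.swap i j)
      ≤ ((Finset.univ.filter
        (fun p : Fin n × Fin n => p.1 < p.2 ∧ w p.2 < w p.1)).erase (i, j)).card := hcard
    _ < invLength w := Finset.card_erase_lt_of_mem hmem

lemma bruhatLE_invLength_le {n : ℕ} {x y : Equiv.Perm (Fin n)} (h : bruhatLE x y) :
    invLength x ≤ invLength y := by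
  induction h with
  | refl => exact le_refl _
  | tail h1 h2 ih => obtain ⟨t, -, -, hlt⟩ := h2; omega

lemma key_min {n : ℕ} (u : Equiv.Perm (Fin n)) (hu : ¬ contains312 u) :
    ∀ w : Equiv.Perm (Fin n), oddDiagram w = oddDiagram u → bruhatLE u w := by
  suffices h : ∀ (N : ℕ) (w : Equiv.Perm (Fin n)), invLength w < N →
      oddDiagram w = oddDiagram u → bruhatLE u w by
    exact fun w hw => h (invLength w + 1) w (Nat.lt_succ_self _) hw
  intro N
  induction N with
  | zero => exact fun w hw => absurd hw (Nat.not_lt_zero _)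
  | succ N ih =>
    intro w hlt hD
    by_cases hwu : w = u
    · exact hwu ▸ Relation.ReflTransGen.refl
    have hex : (Finset.univ.filter (fun k : Fin n => w k ≠ u k)).Nonempty := by
      by_contra h
      rw [Finset.not_nonempty_iff_eq_empty, Finset.filter_eq_empty_iff] at h
      exact hwu (Equiv.ext fun k => by simpa using h (Finset.mem_univ k))
    set p := (Finset.univ.filter (fun k : Fin n => w k ≠ u k)).min' hex with hpdef
    have hpmem : w p ≠ u p := by
      have := Finset.min'_mem _ hex
      rw [Finset.mem_filter] at this
      exact this.2
    have hpre : ∀ k : Fin n, (k : ℕ) < (p : ℕ) → w k = u k := by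
      intro k hk
      by_contra hne
      have h1 : p ≤ k := Finset.min'_le _ _ (by simp [hne])
      have h2 : (p : ℕ) ≤ (k : ℕ) := h1
      omega
    have hvne : (w p : ℕ) ≠ (u p : ℕ) := val_ne_of_ne hpmem
    -- step (a): u p < w p
    have ha : (u p : ℕ) < (w p : ℕ) := by
      by_contra hle
      have hlt2 : (w p : ℕ) < (u p : ℕ) := by omega
      set q := u.symm (w p) with hqdef
      have huq : u q = w p := u.apply_symm_apply _
      have hqne : q ≠ p := fun h => hpmem (by rw [← huq, h])
      have hqp : (p : ℕ) < (q : ℕ) := by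
        have h2 : ¬ ((q : ℕ) < (p : ℕ)) := by
          intro hlt3
          have h3 := hpre q hlt3
          rw [huq] at h3
          exact hqne (w.injective h3.symm).symm
        have := val_ne_of_ne hqne
        omega
      have hparq : (p : ℕ) % 2 = (q : ℕ) % 2 := by
        by_contra hpar
        have hm : (p, w p) ∈ oddDiagram u := by
          rw [mem_odd]
          exact ⟨hlt2, hqp, hpar⟩
        rw [← hD, mem_odd] at hm
        omega
      have hppn : (p : ℕ) + 1 < n := by
        have := q.isLt
        omega
      set h1 : Fin n := ⟨(p : ℕ) + 1, hppn⟩ with hh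
      have hval1 : (h1 : ℕ) = (p : ℕ) + 1 := rfl
      have hne1 : h1 ≠ q := by
        intro heq
        have := congrArg Fin.val heq
        omega
      have hult : (u h1 : ℕ) < (w p : ℕ) := by
        by_contra hge
        have hne2 : (u h1 : ℕ) ≠ (w p : ℕ) := by
          intro h
          have h4 : u h1 = w p := Fin.val_injective h
          rw [← huq] at h4
          exact hne1 (u.injective h4)
        have hm : (h1, w p) ∈ oddDiagram u := by
          rw [mem_odd]
          refine ⟨by omega, ?_, ?_⟩
          · show (h1 : ℕ) < (q : ℕ)
            omega
          · show (h1 : ℕ) % 2 ≠ (q : ℕ) % 2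
            omega
        rw [← hD, mem_odd] at hm
        obtain ⟨-, hm2, -⟩ := hm
        rw [w.symm_apply_apply] at hm2
        omega
      refine hu ⟨p, h1, q, ?_, ?_, ?_, ?_⟩
      · show (p : ℕ) < (h1 : ℕ); omega
      · show (h1 : ℕ) < (q : ℕ); omega
      · show (u h1 : ℕ) < (u q : ℕ)
        rw [huq]; exact hult
      · show (u q : ℕ) < (u p : ℕ)
        rw [huq]; exact hlt2
    -- set up j
    set j := w.symm (u p) with hjdef
    have hwj : w j = u p := w.apply_symm_apply _
    have hwj' : (w j : ℕ) = (u p : ℕ) := by rw [hwj]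
    have hjne : j ≠ p := fun h => hpmem (by rw [← hwj, h])
    have hjp : (p : ℕ) < (j : ℕ) := by
      have h2 : ¬ ((j : ℕ) < (p : ℕ)) := by
        intro hlt3
        have h3 := hpre j hlt3
        rw [hwj] at h3
        exact hjne (u.injective h3.symm)
      have := val_ne_of_ne hjne
      omega
    have hpar : (p : ℕ) % 2 = (j : ℕ) % 2 := by
      by_contra hpar
      have hm : (p, u p) ∈ oddDiagram w := by
        rw [mem_odd]
        exact ⟨ha, hjp, hpar⟩
      rw [hD, mem_odd] at hm
      omega
    have H2 : ∀ k : Fin n, (p : ℕ) < k → (k : ℕ) < j → (k : ℕ) % 2 ≠ (p : ℕ) % 2 →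
        (w k : ℕ) < (w j : ℕ) := by
      intro k hk1 hk2 hk3
      by_contra hge
      have hkj : k ≠ j := by
        intro h
        rw [h] at hk2
        omega
      have hne2 : (w k : ℕ) ≠ (w j : ℕ) := val_ne_of_ne (w.injective.ne hkj)
      have hm : (k, u p) ∈ oddDiagram w := by
        rw [mem_odd]
        refine ⟨by omega, hk2, by omega⟩
      rw [hD, mem_odd] at hm
      obtain ⟨-, hm2, -⟩ := hm
      rw [u.symm_apply_apply] at hm2
      omega
    have H3 : ∀ k : Fin n, (j : ℕ) < k → (k : ℕ) % 2 ≠ (p : ℕ) % 2 →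
        ¬((w j : ℕ) < w k ∧ (w k : ℕ) < w p) := by
      rintro k hk1 hk2 ⟨hk3, hk4⟩
      have hm : (p, w k) ∈ oddDiagram w := by
        rw [mem_odd]
        refine ⟨hk4, ?_, ?_⟩
        · rw [w.symm_apply_apply]
          omega
        · rw [w.symm_apply_apply]
          omega
      rw [hD, mem_odd] at hm
      omega
    have hvalw : (w j : ℕ) < (w p : ℕ) := by omega
    have hAD := oddDiagram_mul_swap w p j hjp hvalw hpar H2 H3
    have hpltj : p < j := hjp
    have hvalF : w j < w p := hvalw
    have hLT := invLength_mul_swap_lt w p j hpltj hvalF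
    have hrec : bruhatLE u (w * Equiv.swap p j) := ih _ (by omega) (hAD.trans hD)
    refine hrec.tail ⟨Equiv.swap p j, ⟨p, j, fun h => (val_ne_of_ne (fun h2 => hjne h2.symm)) (congrArg Fin.val h), rfl⟩, ?_, ?_⟩
    · rw [mul_assoc, Equiv.swap_mul_self, mul_one]
    · exact hLT

theorem stmt9 {n : ℕ} (u : Equiv.Perm (Fin n)) (hu : ¬ contains312 u) :
    (∀ w : Equiv.Perm (Fin n), oddDiagram w = oddDiagram u → bruhatLE u w) ∧
      (∀ u' : Equiv.Perm (Fin n), ¬ contains312 u' → oddDiagram u' = oddDiagram u → u' = u) := by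
  refine ⟨key_min u hu, fun u' hu' hD => ?_⟩
  have h1 : bruhatLE u u' := key_min u hu u' hD
  have h2 : bruhatLE u' u := key_min u' hu' u hD.symm
  have hle2 := bruhatLE_invLength_le h2
  cases h1 with
  | refl => rfl
  | tail hab hbc =>
    obtain ⟨t, -, -, hlt⟩ := hbc
    have := bruhatLE_invLength_le hab
    omega
end

section
/- If u, v in S_n have the same odd diagram, then u^{-1}(k) ≡ v^{-1}(k) (mod 2) for every k in [n]; i.e., each value occupies positions of the same parity in all permutations of an odd diagram class. -/
/-! ### Auxiliary list lemmas -/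

lemma stmt11_all_append_cons (l t : List ℕ) (c : ℕ) (h : ∀ x ∈ l, x = c) :
    l ++ c :: t = c :: (l ++ t) := by
  induction l with
  | nil => rfl
  | cons a l ih =>
      have ha : a = c := h a (List.mem_cons_self)
      rw [List.cons_append, ih (fun x hx => h x (List.mem_cons_of_mem _ hx)), ha,
        List.cons_append]

lemma stmt11_beta {x y z w : List ℕ} {c : ℕ}
    (hmap : x ++ c :: y = z ++ c :: w)
    (hcnt : x.countP (fun e => decide (e ≠ c)) = z.countP (fun e => decide (e ≠ c))) :
    x ++ y = z ++ w := by
  rcases List.append_eq_append_iff.1 hmap with ⟨D, hz, hyw⟩ | ⟨D, hx, hwy⟩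
  · -- z = x ++ D, c :: y = D ++ c :: w
    have hD0 : D.countP (fun e => decide (e ≠ c)) = 0 := by
      have h1 := hcnt
      rw [hz, List.countP_append] at h1
      omega
    have hD : ∀ e ∈ D, e = c := by
      intro e he
      have := (List.countP_eq_zero.1 hD0) e he
      simpa using this
    rw [stmt11_all_append_cons D w c hD] at hyw
    obtain ⟨-, hy⟩ := List.cons_eq_cons.mp hyw
    rw [hz, hy, List.append_assoc]
  · -- x = z ++ D, c :: w = D ++ c :: y
    have hD0 : D.countP (fun e => decide (e ≠ c)) = 0 := by
      have h1 := hcnt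
      rw [hx, List.countP_append] at h1
      omega
    have hD : ∀ e ∈ D, e = c := by
      intro e he
      have := (List.countP_eq_zero.1 hD0) e he
      simpa using this
    rw [stmt11_all_append_cons D y c hD] at hwy
    obtain ⟨-, hw⟩ := List.cons_eq_cons.mp hwy
    rw [hx, hw, List.append_assoc]

/-- The key combinatorial lemma: if two strictly sorted lists have elementwise equal
parities, `p` is a member of the first, `q` of the second, and the "smaller elements of
opposite parity" sublists agree, then `p` and `q` have the same parity and removing them
preserves elementwise parity equality. -/
lemma stmt11_key {A B : List ℕ} {p q : ℕ}
    (hA : A.Pairwise (· < ·)) (hB : B.Pairwise (· < ·))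
    (hp : p ∈ A) (hq : q ∈ B)
    (hmap : A.map (· % 2) = B.map (· % 2))
    (hC : A.filter (fun x => decide (x < p ∧ x % 2 ≠ p % 2))
        = B.filter (fun x => decide (x < q ∧ x % 2 ≠ q % 2))) :
    p % 2 = q % 2 ∧
      (A.filter (fun x => decide (x ≠ p))).map (· % 2)
        = (B.filter (fun x => decide (x ≠ q))).map (· % 2) := by
  obtain ⟨X, Y, hXY⟩ := List.append_of_mem hp
  obtain ⟨Z, W, hZW⟩ := List.append_of_mem hq
  subst hXY; subst hZW
  rw [List.pairwise_append] at hA hB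
  have hXp : ∀ x ∈ X, x < p := fun x hx => hA.2.2 x hx p (List.mem_cons_self)
  have hpY : ∀ y ∈ Y, p < y := (List.pairwise_cons.1 hA.2.1).1
  have hZq : ∀ x ∈ Z, x < q := fun x hx => hB.2.2 x hx q (List.mem_cons_self)
  have hqW : ∀ y ∈ W, q < y := (List.pairwise_cons.1 hB.2.1).1
  -- simplify the column hypothesis
  have hfA : (X ++ p :: Y).filter (fun x => decide (x < p ∧ x % 2 ≠ p % 2))
      = X.filter (fun x => decide (x % 2 ≠ p % 2)) := by
    rw [List.filter_append, List.filter_cons]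
    have h1 : X.filter (fun x => decide (x < p ∧ x % 2 ≠ p % 2))
        = X.filter (fun x => decide (x % 2 ≠ p % 2)) :=
      List.filter_congr (fun x hx => by
        simp [hXp x hx])
    have h2 : Y.filter (fun x => decide (x < p ∧ x % 2 ≠ p % 2)) = [] := by
      rw [List.eq_nil_iff_forall_not_mem]
      intro a ha
      have h3 := List.mem_filter.1 ha
      have h4 := hpY a h3.1
      have h5 := of_decide_eq_true h3.2
      omega
    simp only [lt_self_iff_false, false_and, decide_false, if_neg, h1, h2]
    simp
  have hfB : (Z ++ q :: W).filter (fun x => decide (x < q ∧ x % 2 ≠ q % 2))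
      = Z.filter (fun x => decide (x % 2 ≠ q % 2)) := by
    rw [List.filter_append, List.filter_cons]
    have h1 : Z.filter (fun x => decide (x < q ∧ x % 2 ≠ q % 2))
        = Z.filter (fun x => decide (x % 2 ≠ q % 2)) :=
      List.filter_congr (fun x hx => by
        simp [hZq x hx])
    have h2 : W.filter (fun x => decide (x < q ∧ x % 2 ≠ q % 2)) = [] := by
      rw [List.eq_nil_iff_forall_not_mem]
      intro a ha
      have h3 := List.mem_filter.1 ha
      have h4 := hqW a h3.1
      have h5 := of_decide_eq_true h3.2
      omega
    simp only [lt_self_iff_false, false_and, decide_false, if_neg, h1, h2]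
    simp
  rw [hfA, hfB] at hC
  -- the parities of p and q agree
  have hmap' : X.map (· % 2) ++ (p % 2) :: Y.map (· % 2)
      = Z.map (· % 2) ++ (q % 2) :: W.map (· % 2) := by
    simpa using hmap
  have hpq : p % 2 = q % 2 := by
    by_contra hne
    have hXnil : X.filter (fun x => decide (x % 2 ≠ p % 2)) = [] := by
      rw [List.eq_nil_iff_forall_not_mem]
      intro a ha
      have h1 := of_decide_eq_true (List.mem_filter.1 ha).2
      have ha' : a ∈ Z.filter (fun x => decide (x % 2 ≠ q % 2)) := hC ▸ ha
      have h2 := of_decide_eq_true (List.mem_filter.1 ha').2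
      omega
    have hZnil : Z.filter (fun x => decide (x % 2 ≠ q % 2)) = [] := hC.symm.trans hXnil
    have hXall : ∀ e ∈ X.map (· % 2), e = p % 2 := by
      intro e he
      obtain ⟨x, hx, rfl⟩ := List.mem_map.1 he
      by_contra hxe
      have : x ∈ X.filter (fun x => decide (x % 2 ≠ p % 2)) :=
        List.mem_filter.2 ⟨hx, decide_eq_true hxe⟩
      rw [hXnil] at this
      exact List.not_mem_nil this
    have hZall : ∀ e ∈ Z.map (· % 2), e = q % 2 := by
      intro e he
      obtain ⟨x, hx, rfl⟩ := List.mem_map.1 he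
      by_contra hxe
      have : x ∈ Z.filter (fun x => decide (x % 2 ≠ q % 2)) :=
        List.mem_filter.2 ⟨hx, decide_eq_true hxe⟩
      rw [hZnil] at this
      exact List.not_mem_nil this
    have h1 : (X.map (· % 2) ++ (p % 2) :: Y.map (· % 2)).head? = some (p % 2) := by
      rw [stmt11_all_append_cons _ _ _ hXall]; rfl
    have h2 : (Z.map (· % 2) ++ (q % 2) :: W.map (· % 2)).head? = some (q % 2) := by
      rw [stmt11_all_append_cons _ _ _ hZall]; rfl
    rw [hmap', h2] at h1
    exact hne (Option.some_injective _ h1.symm)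
  refine ⟨hpq, ?_⟩
  -- second part: remove p and q
  have hC2 : X.filter (fun x => decide (x % 2 ≠ p % 2))
      = Z.filter (fun x => decide (x % 2 ≠ p % 2)) := by
    rw [hC]
    exact List.filter_congr (fun x _ => by rw [hpq])
  have hcnt : X.countP (fun x => decide (x % 2 ≠ p % 2))
      = Z.countP (fun x => decide (x % 2 ≠ p % 2)) := by
    rw [List.countP_eq_length_filter, List.countP_eq_length_filter, hC2]
  have hmap'' : X.map (· % 2) ++ (p % 2) :: Y.map (· % 2)
      = Z.map (· % 2) ++ (p % 2) :: W.map (· % 2) := by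
    rw [← hpq] at hmap'; exact hmap'
  have hbeta := stmt11_beta hmap'' (by
    rw [List.countP_map, List.countP_map]
    exact hcnt)
  have hAfil : (X ++ p :: Y).filter (fun x => decide (x ≠ p)) = X ++ Y := by
    rw [List.filter_append, List.filter_cons]
    have h1 : X.filter (fun x => decide (x ≠ p)) = X :=
      List.filter_eq_self.2 (fun x hx => decide_eq_true (Nat.ne_of_lt (hXp x hx)))
    have h2 : Y.filter (fun x => decide (x ≠ p)) = Y :=
      List.filter_eq_self.2 (fun x hx => decide_eq_true (Nat.ne_of_gt (hpY x hx)))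
    simp only [ne_eq, not_true_eq_false, decide_false, if_neg, h1, h2]
    simp
  have hBfil : (Z ++ q :: W).filter (fun x => decide (x ≠ q)) = Z ++ W := by
    rw [List.filter_append, List.filter_cons]
    have h1 : Z.filter (fun x => decide (x ≠ q)) = Z :=
      List.filter_eq_self.2 (fun x hx => decide_eq_true (Nat.ne_of_lt (hZq x hx)))
    have h2 : W.filter (fun x => decide (x ≠ q)) = W :=
      List.filter_eq_self.2 (fun x hx => decide_eq_true (Nat.ne_of_gt (hqW x hx)))
    simp only [ne_eq, not_true_eq_false, decide_false, if_neg, h1, h2]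
    simp
  rw [hAfil, hBfil, List.map_append, List.map_append]
  exact hbeta

/-! ### Positions of large values -/

def stmt11_posVal {n : ℕ} (w : Equiv.Perm (Fin n)) (x : ℕ) : ℕ :=
  if hx : x < n then (w ⟨x, hx⟩ : ℕ) else 0

def stmt11_gaps {n : ℕ} (w : Equiv.Perm (Fin n)) (k : ℕ) : List ℕ :=
  (List.range n).filter (fun x => decide (k ≤ stmt11_posVal w x))

lemma stmt11_gaps_sorted {n : ℕ} (w : Equiv.Perm (Fin n)) (k : ℕ) :
    (stmt11_gaps w k).Pairwise (· < ·) :=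
  (List.pairwise_lt_range (n := n)).sublist List.filter_sublist

lemma stmt11_mem_gaps {n : ℕ} (w : Equiv.Perm (Fin n)) (k : ℕ) (x : ℕ) :
    x ∈ stmt11_gaps w k ↔ x < n ∧ k ≤ stmt11_posVal w x := by
  simp [stmt11_gaps, List.mem_filter, List.mem_range]

lemma stmt11_posVal_eq {n : ℕ} (w : Equiv.Perm (Fin n)) {x : ℕ} (hx : x < n) :
    stmt11_posVal w x = (w ⟨x, hx⟩ : ℕ) := dif_pos hx

lemma stmt11_posVal_eq_iff {n : ℕ} (w : Equiv.Perm (Fin n)) {x k : ℕ} (hx : x < n)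
    (hk : k < n) : stmt11_posVal w x = k ↔ x = ((w.symm ⟨k, hk⟩ : Fin n) : ℕ) := by
  rw [stmt11_posVal_eq w hx]
  constructor
  · intro h
    have : w ⟨x, hx⟩ = ⟨k, hk⟩ := Fin.ext h
    have h2 : (⟨x, hx⟩ : Fin n) = w.symm ⟨k, hk⟩ := by
      rw [← this, Equiv.symm_apply_apply]
    exact congrArg Fin.val h2
  · intro h
    have h2 : (⟨x, hx⟩ : Fin n) = w.symm ⟨k, hk⟩ := Fin.ext h
    rw [h2, Equiv.apply_symm_apply]

theorem stmt11 {n : ℕ} (u v : Equiv.Perm (Fin n))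
    (h : oddDiagram u = oddDiagram v) :
    ∀ k : Fin n, (u.symm k : ℕ) % 2 = (v.symm k : ℕ) % 2 := by
  have hcell : ∀ i j : Fin n,
      (((j : ℕ) < (u i : ℕ) ∧ (i : ℕ) < (u.symm j : ℕ) ∧ (i : ℕ) % 2 ≠ (u.symm j : ℕ) % 2) ↔
       ((j : ℕ) < (v i : ℕ) ∧ (i : ℕ) < (v.symm j : ℕ) ∧ (i : ℕ) % 2 ≠ (v.symm j : ℕ) % 2)) := by
    intro i j
    have := Finset.ext_iff.1 h (i, j)
    simpa [oddDiagram] using this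
  suffices hmain : ∀ k : ℕ,
      (∀ j : Fin n, (j : ℕ) < k → ((u.symm j : ℕ) % 2 = (v.symm j : ℕ) % 2)) ∧
      ((stmt11_gaps u k).map (· % 2) = (stmt11_gaps v k).map (· % 2)) by
    intro k
    exact (hmain n).1 k k.isLt
  intro k
  induction k with
  | zero =>
      refine ⟨fun j hj => absurd hj (Nat.not_lt_zero _), ?_⟩
      have h1 : stmt11_gaps u 0 = List.range n :=
        List.filter_eq_self.2 (fun x _ => by simp)
      have h2 : stmt11_gaps v 0 = List.range n :=
        List.filter_eq_self.2 (fun x _ => by simp)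
      rw [h1, h2]
  | succ k ih =>
      by_cases hk : k < n
      · -- the interesting case
        obtain ⟨p, hpdef⟩ : ∃ p : ℕ, p = ((u.symm ⟨k, hk⟩ : Fin n) : ℕ) := ⟨_, rfl⟩
        obtain ⟨q, hqdef⟩ : ∃ q : ℕ, q = ((v.symm ⟨k, hk⟩ : Fin n) : ℕ) := ⟨_, rfl⟩
        have hpn : p < n := hpdef ▸ (u.symm ⟨k, hk⟩).isLt
        have hqn : q < n := hqdef ▸ (v.symm ⟨k, hk⟩).isLt
        have hpu : stmt11_posVal u p = k := by
          rw [stmt11_posVal_eq u hpn]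
          have h0 : (⟨p, hpn⟩ : Fin n) = u.symm ⟨k, hk⟩ := Fin.ext hpdef
          rw [h0, Equiv.apply_symm_apply]
        have hqv : stmt11_posVal v q = k := by
          rw [stmt11_posVal_eq v hqn]
          have h0 : (⟨q, hqn⟩ : Fin n) = v.symm ⟨k, hk⟩ := Fin.ext hqdef
          rw [h0, Equiv.apply_symm_apply]
        have hpmem : p ∈ stmt11_gaps u k := (stmt11_mem_gaps u k p).2 ⟨hpn, le_of_eq hpu.symm⟩
        have hqmem : q ∈ stmt11_gaps v k := (stmt11_mem_gaps v k q).2 ⟨hqn, le_of_eq hqv.symm⟩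
        -- column equality
        have hC : (stmt11_gaps u k).filter (fun x => decide (x < p ∧ x % 2 ≠ p % 2))
            = (stmt11_gaps v k).filter (fun x => decide (x < q ∧ x % 2 ≠ q % 2)) := by
          unfold stmt11_gaps
          rw [List.filter_filter, List.filter_filter]
          refine List.filter_congr (fun x hx => ?_)
          have hxn : x < n := List.mem_range.1 hx
          rw [← Bool.decide_and, ← Bool.decide_and]
          rw [decide_eq_decide]
          have hiff := hcell ⟨x, hxn⟩ ⟨k, hk⟩
          rw [← hpdef, ← hqdef] at hiff
          constructor
          · rintro ⟨⟨hx1, hx2⟩, hx3⟩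
            have hne : stmt11_posVal u x ≠ k := by
              intro hEq
              have h5 := (stmt11_posVal_eq_iff u hxn hk).1 hEq
              rw [← hpdef] at h5
              exact absurd h5 (Nat.ne_of_lt hx1)
            have hlt : k < (u ⟨x, hxn⟩ : ℕ) := by
              rw [stmt11_posVal_eq u hxn] at hx3 hne
              exact lt_of_le_of_ne hx3 (Ne.symm hne)
            have h2 := hiff.1 ⟨hlt, hx1, hx2⟩
            refine ⟨⟨h2.2.1, h2.2.2⟩, ?_⟩
            rw [stmt11_posVal_eq v hxn]
            exact le_of_lt h2.1
          · rintro ⟨⟨hx1, hx2⟩, hx3⟩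
            have hne : stmt11_posVal v x ≠ k := by
              intro hEq
              have h5 := (stmt11_posVal_eq_iff v hxn hk).1 hEq
              rw [← hqdef] at h5
              exact absurd h5 (Nat.ne_of_lt hx1)
            have hlt : k < (v ⟨x, hxn⟩ : ℕ) := by
              rw [stmt11_posVal_eq v hxn] at hx3 hne
              exact lt_of_le_of_ne hx3 (Ne.symm hne)
            have h2 := hiff.2 ⟨hlt, hx1, hx2⟩
            refine ⟨⟨h2.2.1, h2.2.2⟩, ?_⟩
            rw [stmt11_posVal_eq u hxn]
            exact le_of_lt h2.1
        obtain ⟨hpq, hrest⟩ := stmt11_key (stmt11_gaps_sorted u k) (stmt11_gaps_sorted v k)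
          hpmem hqmem ih.2 hC
        -- gaps at level k+1
        have hgu : stmt11_gaps u (k+1) = (stmt11_gaps u k).filter (fun x => decide (x ≠ p)) := by
          unfold stmt11_gaps
          rw [List.filter_filter]
          refine List.filter_congr (fun x hx => ?_)
          have hxn : x < n := List.mem_range.1 hx
          rw [← Bool.decide_and, decide_eq_decide]
          constructor
          · intro h1
            refine ⟨fun hxp => ?_, by omega⟩
            rw [hxp, hpu] at h1
            omega
          · rintro ⟨h1, h2⟩
            have h3 : stmt11_posVal u x ≠ k := fun hEq => h1 (by
              rw [hpdef]
              exact (stmt11_posVal_eq_iff u hxn hk).1 hEq)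
            omega
        have hgv : stmt11_gaps v (k+1) = (stmt11_gaps v k).filter (fun x => decide (x ≠ q)) := by
          unfold stmt11_gaps
          rw [List.filter_filter]
          refine List.filter_congr (fun x hx => ?_)
          have hxn : x < n := List.mem_range.1 hx
          rw [← Bool.decide_and, decide_eq_decide]
          constructor
          · intro h1
            refine ⟨fun hxp => ?_, by omega⟩
            rw [hxp, hqv] at h1
            omega
          · rintro ⟨h1, h2⟩
            have h3 : stmt11_posVal v x ≠ k := fun hEq => h1 (by
              rw [hqdef]
              exact (stmt11_posVal_eq_iff v hxn hk).1 hEq)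
            omega
        refine ⟨?_, by rw [hgu, hgv]; exact hrest⟩
        intro j hj
        rcases Nat.lt_or_ge (j : ℕ) k with hjk | hjk
        · exact ih.1 j hjk
        · have hjk' : (j : ℕ) = k := by omega
          have hj' : j = ⟨k, hk⟩ := Fin.ext hjk'
          rw [hj', ← hpdef, ← hqdef]
          exact hpq
      · -- k ≥ n : gaps are empty, parity claim unchanged
        push_neg at hk
        refine ⟨fun j hj => ih.1 j (by have := j.isLt; omega), ?_⟩
        have h1 : stmt11_gaps u (k+1) = [] := by
          rw [List.eq_nil_iff_forall_not_mem]
          intro x hx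
          obtain ⟨hxn, hxk⟩ := (stmt11_mem_gaps u (k+1) x).1 hx
          have : stmt11_posVal u x < n := by
            rw [stmt11_posVal_eq u hxn]; exact (u ⟨x, hxn⟩).isLt
          omega
        have h2 : stmt11_gaps v (k+1) = [] := by
          rw [List.eq_nil_iff_forall_not_mem]
          intro x hx
          obtain ⟨hxn, hxk⟩ := (stmt11_mem_gaps v (k+1) x).1 hx
          have : stmt11_posVal v x < n := by
            rw [stmt11_posVal_eq v hxn]; exact (v ⟨x, hxn⟩).isLt
          omega
        rw [h1, h2]
end
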